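/- arXiv:2411.11549 — 8 statements merged into one kernel-verified Lean document; each statement's English description precedes it below -/
import Mathlib

section
/- Let S be a finite set, F, Z ⊆ S disjoint, S? = S \ (F ∪ Z), and P : S × S → ℝ a stochastic matrix. Define reach_k, stay_k as in the context and let g : S → [0,1] be any fixed point of the Bellman equations (g = 1 on F, g = 0 on Z, g(s) = ∑_{s'} P(s,s')·g(s') for s ∈ S?). Define the k-step staying kernel Q_k : S? × S? → ℝ by Q_0(s,s') = 1 if s' = s and 0 otherwise, and Q_{k+1}(s,s') = ∑_{t∈S?} P(s,t)·Q_k(t,s'). Then for all k and all s ∈ S?: (i) stay_k(s) = ∑_{s'∈S?} Q_k(s,s'); (ii) g(s) = reach_k(s) + ∑_{s'∈S?} Q_k(s,s')·g(s'); and consequently (iii) reach_k(s) + stay_k(s)·min_{s'∈S?} g(s') ≤ g(s) ≤ reach_k(s) + stay_k(s)·max_{s'∈S?} g(s') whenever S? is nonempty. -/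
/-- A finite Markov chain: a stochastic matrix `P` on a finite state space. -/
structure MC (S : Type) [Fintype S] where
  P : S → S → ℝ
  nonneg : ∀ s s', 0 ≤ P s s'
  rowsum : ∀ s, ∑ s', P s s' = 1

/-- For a finite Markov chain partitioned into targets `F`, sinks `Z` and unknown
states `S? = S \ (F ∪ Z)`, with `reach_k`, `stay_k` the k-step reachability/staying
probabilities, `g` any Bellman fixed point with values in `[0,1]`, and `Q_k` the
k-step staying kernel: (i) `stay_k(s) = ∑_{s'∈S?} Q_k(s,s')`;
(ii) `g(s) = reach_k(s) + ∑_{s'∈S?} Q_k(s,s')·g(s')`; and (iii) whenever `S?` is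
nonempty, `reach_k(s) + stay_k(s)·min_{S?} g ≤ g(s) ≤ reach_k(s) + stay_k(s)·max_{S?} g`. -/
theorem svi_mc_decomposition {S : Type} [Fintype S] [DecidableEq S] (M : MC S)
    (F Z : Finset S) (hFZ : Disjoint F Z)
    (SUnk : Finset S) (hSUnk : SUnk = Finset.univ \ (F ∪ Z))
    (reach stay : ℕ → S → ℝ)
    (hF : ∀ k, ∀ s ∈ F, reach k s = 1 ∧ stay k s = 0)
    (hZ : ∀ k, ∀ s ∈ Z, reach k s = 0 ∧ stay k s = 0)
    (h0 : ∀ s ∈ SUnk, reach 0 s = 0 ∧ stay 0 s = 1)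
    (hreach : ∀ k, ∀ s ∈ SUnk, reach (k + 1) s = ∑ s', M.P s s' * reach k s')
    (hstay : ∀ k, ∀ s ∈ SUnk, stay (k + 1) s = ∑ s', M.P s s' * stay k s')
    (g : S → ℝ) (hg01 : ∀ s, g s ∈ Set.Icc (0 : ℝ) 1)
    (hgF : ∀ s ∈ F, g s = 1) (hgZ : ∀ s ∈ Z, g s = 0)
    (hgU : ∀ s ∈ SUnk, g s = ∑ s', M.P s s' * g s')
    (Q : ℕ → S → S → ℝ)
    (hQ0 : ∀ s s', Q 0 s s' = if s' = s then 1 else 0)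
    (hQk : ∀ k s s', Q (k + 1) s s' = ∑ t ∈ SUnk, M.P s t * Q k t s') :
    ∀ k, ∀ s ∈ SUnk,
      (stay k s = ∑ s' ∈ SUnk, Q k s s') ∧
      (g s = reach k s + ∑ s' ∈ SUnk, Q k s s' * g s') ∧
      (∀ h : SUnk.Nonempty,
        reach k s + stay k s * SUnk.inf' h g ≤ g s ∧
          g s ≤ reach k s + stay k s * SUnk.sup' h g) := by
  have hsplit : ∀ f : S → ℝ, ∑ s', f s' =
      ∑ s' ∈ F, f s' + ∑ s' ∈ Z, f s' + ∑ s' ∈ SUnk, f s' := by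
    intro f
    rw [hSUnk, ← Finset.sum_sdiff (Finset.subset_univ (F ∪ Z)), Finset.sum_union hFZ]
    ring
  have hQnn : ∀ k s s', 0 ≤ Q k s s' := by
    intro k
    induction k with
    | zero => intro s s'; rw [hQ0]; positivity
    | succ k ih =>
      intro s s'
      rw [hQk]
      exact Finset.sum_nonneg fun t _ => mul_nonneg (M.nonneg s t) (ih t s')
  have main : ∀ k, ∀ s ∈ SUnk, stay k s = ∑ s' ∈ SUnk, Q k s s' ∧
      g s = reach k s + ∑ s' ∈ SUnk, Q k s s' * g s' := by
    intro k
    induction k with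
    | zero =>
      intro s hs
      constructor
      · simp only [hQ0, Finset.sum_ite_eq', hs, if_true, (h0 s hs).2]
      · simp only [hQ0, ite_mul, one_mul, zero_mul, Finset.sum_ite_eq', hs, if_true,
          (h0 s hs).1, zero_add]
    | succ k ih =>
      intro s hs
      have key : ∀ t ∈ SUnk, M.P s t * stay k t =
          ∑ s' ∈ SUnk, M.P s t * Q k t s' := by
        intro t ht
        rw [(ih t ht).1, Finset.mul_sum]
      constructor
      · rw [hstay k s hs, hsplit]
        have hFpart : ∑ s' ∈ F, M.P s s' * stay k s' = 0 :=
          Finset.sum_eq_zero fun t ht => by rw [(hF k t ht).2, mul_zero]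
        have hZpart : ∑ s' ∈ Z, M.P s s' * stay k s' = 0 :=
          Finset.sum_eq_zero fun t ht => by rw [(hZ k t ht).2, mul_zero]
        rw [hFpart, hZpart, zero_add, zero_add, Finset.sum_congr rfl key,
          Finset.sum_comm]
        exact Finset.sum_congr rfl fun s' _ => (hQk k s s').symm
      · have hgs : g s = ∑ s' ∈ F, M.P s s' + ∑ t ∈ SUnk, M.P s t * g t := by
          rw [hgU s hs, hsplit]
          have hFpart : ∑ s' ∈ F, M.P s s' * g s' = ∑ s' ∈ F, M.P s s' :=
            Finset.sum_congr rfl fun t ht => by rw [hgF t ht, mul_one]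
          have hZpart : ∑ s' ∈ Z, M.P s s' * g s' = 0 :=
            Finset.sum_eq_zero fun t ht => by rw [hgZ t ht, mul_zero]
          rw [hFpart, hZpart, add_zero]
        have hr : reach (k + 1) s = ∑ s' ∈ F, M.P s s' + ∑ t ∈ SUnk, M.P s t * reach k t := by
          rw [hreach k s hs, hsplit]
          have hFpart : ∑ s' ∈ F, M.P s s' * reach k s' = ∑ s' ∈ F, M.P s s' :=
            Finset.sum_congr rfl fun t ht => by rw [(hF k t ht).1, mul_one]
          have hZpart : ∑ s' ∈ Z, M.P s s' * reach k s' = 0 :=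
            Finset.sum_eq_zero fun t ht => by rw [(hZ k t ht).1, mul_zero]
          rw [hFpart, hZpart, add_zero]
        have hmid : ∑ t ∈ SUnk, M.P s t * g t =
            ∑ t ∈ SUnk, M.P s t * reach k t +
              ∑ s' ∈ SUnk, Q (k + 1) s s' * g s' := by
          calc ∑ t ∈ SUnk, M.P s t * g t
              = ∑ t ∈ SUnk, (M.P s t * reach k t +
                  ∑ s' ∈ SUnk, M.P s t * (Q k t s' * g s')) := by
                refine Finset.sum_congr rfl fun t ht => ?_
                rw [(ih t ht).2, mul_add, Finset.mul_sum]
            _ = ∑ t ∈ SUnk, M.P s t * reach k t +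
                  ∑ t ∈ SUnk, ∑ s' ∈ SUnk, M.P s t * (Q k t s' * g s') := by
                rw [Finset.sum_add_distrib]
            _ = ∑ t ∈ SUnk, M.P s t * reach k t +
                  ∑ s' ∈ SUnk, Q (k + 1) s s' * g s' := by
                rw [Finset.sum_comm]
                congr 1
                refine Finset.sum_congr rfl fun s' _ => ?_
                rw [hQk, Finset.sum_mul]
                exact Finset.sum_congr rfl fun t _ => by ring
        rw [hgs, hmid, hr]; ring
  intro k s hs
  obtain ⟨h1, h2⟩ := main k s hs
  refine ⟨h1, h2, fun hne => ?_⟩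
  constructor
  · rw [h2, h1, Finset.sum_mul]
    refine add_le_add_right (Finset.sum_le_sum fun s' hs' => ?_) _
    exact mul_le_mul_of_nonneg_left (Finset.inf'_le g hs') (hQnn k s s')
  · rw [h2, h1, Finset.sum_mul]
    refine add_le_add_right (Finset.sum_le_sum fun s' hs' => ?_) _
    exact mul_le_mul_of_nonneg_left (Finset.le_sup' g hs') (hQnn k s s')
end

section
/- Let S be a finite set, F, Z ⊆ S disjoint, S? = S \ (F ∪ Z) nonempty, and P : S × S → ℝ a stochastic matrix, with reach_k, stay_k defined as in the context. Let g : S → [0,1] be any fixed point of the Bellman equations (g = 1 on F, g = 0 on Z, g(s) = ∑_{s'} P(s,s')·g(s') for s ∈ S?). If stay_k(s) < 1 for all s ∈ S?, then for every s' ∈ S?: min_{s∈S?} reach_k(s)/(1−stay_k(s)) ≤ g(s') ≤ max_{s∈S?} reach_k(s)/(1−stay_k(s)). -/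
/-- For a finite Markov chain partitioned into `F`, `Z`, `S? = S \ (F ∪ Z)` (nonempty),
with `reach_k`, `stay_k` as usual and `g` any Bellman fixed point in `[0,1]`:
if `stay_k(s) < 1` for all `s ∈ S?`, then for every `s' ∈ S?`,
`min_{s∈S?} reach_k(s)/(1−stay_k(s)) ≤ g(s') ≤ max_{s∈S?} reach_k(s)/(1−stay_k(s))`. -/
theorem svi_mc_ratio_bounds {S : Type} [Fintype S] [DecidableEq S] (M : MC S)
    (F Z : Finset S) (hFZ : Disjoint F Z)
    (SUnk : Finset S) (hSUnk : SUnk = Finset.univ \ (F ∪ Z))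
    (hne : SUnk.Nonempty)
    (reach stay : ℕ → S → ℝ)
    (hF : ∀ k, ∀ s ∈ F, reach k s = 1 ∧ stay k s = 0)
    (hZ : ∀ k, ∀ s ∈ Z, reach k s = 0 ∧ stay k s = 0)
    (h0 : ∀ s ∈ SUnk, reach 0 s = 0 ∧ stay 0 s = 1)
    (hreach : ∀ k, ∀ s ∈ SUnk, reach (k + 1) s = ∑ s', M.P s s' * reach k s')
    (hstay : ∀ k, ∀ s ∈ SUnk, stay (k + 1) s = ∑ s', M.P s s' * stay k s')
    (g : S → ℝ) (hg01 : ∀ s, g s ∈ Set.Icc (0 : ℝ) 1)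
    (hgF : ∀ s ∈ F, g s = 1) (hgZ : ∀ s ∈ Z, g s = 0)
    (hgU : ∀ s ∈ SUnk, g s = ∑ s', M.P s s' * g s')
    (k : ℕ) (hstaylt : ∀ s ∈ SUnk, stay k s < 1) :
    ∀ s' ∈ SUnk,
      SUnk.inf' hne (fun s => reach k s / (1 - stay k s)) ≤ g s' ∧
        g s' ≤ SUnk.sup' hne (fun s => reach k s / (1 - stay k s)) := by
  set m := SUnk.inf' hne g with hm
  set Mx := SUnk.sup' hne g with hMx
  -- case analysis helper: every state is in F, Z, or SUnk
  have hcases : ∀ s : S, s ∈ F ∨ s ∈ Z ∨ s ∈ SUnk := by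
    intro s
    by_cases hf : s ∈ F
    · exact Or.inl hf
    by_cases hz : s ∈ Z
    · exact Or.inr (Or.inl hz)
    · refine Or.inr (Or.inr ?_)
      simp [hSUnk, hf, hz]
  -- key sandwich lemma
  have key : ∀ j, ∀ s ∈ SUnk,
      reach j s + stay j s * m ≤ g s ∧ g s ≤ reach j s + stay j s * Mx := by
    intro j
    induction j with
    | zero =>
      intro s hs
      obtain ⟨hr0, hs0⟩ := h0 s hs
      rw [hr0, hs0]
      constructor
      · rw [zero_add, one_mul]; exact Finset.inf'_le g hs
      · rw [zero_add, one_mul]; exact Finset.le_sup' g hs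
    | succ j ih =>
      intro s hs
      have hterm : ∀ s' : S,
          reach j s' + stay j s' * m ≤ g s' ∧ g s' ≤ reach j s' + stay j s' * Mx := by
        intro s'
        rcases hcases s' with hf | hz | hu
        · obtain ⟨hr, hst⟩ := hF j s' hf
          rw [hr, hst, hgF s' hf]; norm_num
        · obtain ⟨hr, hst⟩ := hZ j s' hz
          rw [hr, hst, hgZ s' hz]; norm_num
        · exact ih s' hu
      have heq : ∀ c : ℝ, reach (j+1) s + stay (j+1) s * c
          = ∑ s', M.P s s' * (reach j s' + stay j s' * c) := by
        intro c
        rw [hreach j s hs, hstay j s hs, Finset.sum_mul]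
        rw [← Finset.sum_add_distrib]
        congr 1; ext s'; ring
      rw [hgU s hs, heq m, heq Mx]
      constructor
      · apply Finset.sum_le_sum
        intro s' _
        exact mul_le_mul_of_nonneg_left (hterm s').1 (M.nonneg s s')
      · apply Finset.sum_le_sum
        intro s' _
        exact mul_le_mul_of_nonneg_left (hterm s').2 (M.nonneg s s')
  intro s' hs'
  obtain ⟨s₁, hs₁, hgs₁⟩ := Finset.exists_mem_eq_inf' hne g
  obtain ⟨s₂, hs₂, hgs₂⟩ := Finset.exists_mem_eq_sup' hne g
  have h1pos : ∀ s ∈ SUnk, 0 < 1 - stay k s := fun s hs => by linarith [hstaylt s hs]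
  constructor
  · have hmeq : m = g s₁ := hm.trans hgs₁
    have h1 := (key k s₁ hs₁).1
    rw [← hmeq] at h1
    have hratio : reach k s₁ / (1 - stay k s₁) ≤ m := by
      rw [div_le_iff₀ (h1pos s₁ hs₁)]; nlinarith
    calc SUnk.inf' hne (fun s => reach k s / (1 - stay k s))
        ≤ reach k s₁ / (1 - stay k s₁) := Finset.inf'_le _ hs₁
      _ ≤ m := hratio
      _ ≤ g s' := Finset.inf'_le g hs'
  · have hMeq : Mx = g s₂ := hMx.trans hgs₂
    have h2 := (key k s₂ hs₂).2
    rw [← hMeq] at h2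
    have hratio : Mx ≤ reach k s₂ / (1 - stay k s₂) := by
      rw [le_div_iff₀ (h1pos s₂ hs₂)]; nlinarith
    calc g s' ≤ Mx := Finset.le_sup' g hs'
      _ ≤ reach k s₂ / (1 - stay k s₂) := hratio
      _ ≤ SUnk.sup' hne (fun s => reach k s / (1 - stay k s)) :=
          Finset.le_sup' (fun s => reach k s / (1 - stay k s)) hs₂
end

section
/- (Sound value iteration for Markov chains, Theorem 2.2.) Let S be a finite set, F, Z ⊆ S disjoint, S? = S \ (F ∪ Z) nonempty, P : S × S → ℝ a stochastic matrix, reach_k and stay_k defined as in the context, and V the value (least fixed point of the Bellman equations). Let k ≥ 0 be such that stay_k(s) < 1 for all s ∈ S?. Set l_k = min_{s'∈S?} reach_k(s')/(1−stay_k(s')) and u_k = max_{s'∈S?} reach_k(s')/(1−stay_k(s')). Then for every s ∈ S?: reach_k(s) + stay_k(s)·l_k ≤ V(s) ≤ reach_k(s) + stay_k(s)·u_k. -/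
/-- Sound value iteration for Markov chains (Thm. 2.2): for a finite Markov chain
partitioned into `F`, `Z`, `S? = S \ (F ∪ Z)` (nonempty), with `reach_k`, `stay_k`
as usual and `V` the value (least Bellman fixed point in `[0,1]`): if
`stay_k(s) < 1` for all `s ∈ S?`, then with
`l_k = min_{s'∈S?} reach_k(s')/(1−stay_k(s'))` and
`u_k = max_{s'∈S?} reach_k(s')/(1−stay_k(s'))`, every `s ∈ S?` satisfies
`reach_k(s) + stay_k(s)·l_k ≤ V(s) ≤ reach_k(s) + stay_k(s)·u_k`. -/
theorem svi_mc_sound_value_iteration {S : Type} [Fintype S] [DecidableEq S] (M : MC S)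
    (F Z : Finset S) (hFZ : Disjoint F Z)
    (SUnk : Finset S) (hSUnk : SUnk = Finset.univ \ (F ∪ Z))
    (hne : SUnk.Nonempty)
    (reach stay : ℕ → S → ℝ)
    (hF : ∀ k, ∀ s ∈ F, reach k s = 1 ∧ stay k s = 0)
    (hZ : ∀ k, ∀ s ∈ Z, reach k s = 0 ∧ stay k s = 0)
    (h0 : ∀ s ∈ SUnk, reach 0 s = 0 ∧ stay 0 s = 1)
    (hreach : ∀ k, ∀ s ∈ SUnk, reach (k + 1) s = ∑ s', M.P s s' * reach k s')
    (hstay : ∀ k, ∀ s ∈ SUnk, stay (k + 1) s = ∑ s', M.P s s' * stay k s')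
    (V : S → ℝ) (hV01 : ∀ s, V s ∈ Set.Icc (0 : ℝ) 1)
    (hVF : ∀ s ∈ F, V s = 1) (hVZ : ∀ s ∈ Z, V s = 0)
    (hVU : ∀ s ∈ SUnk, V s = ∑ s', M.P s s' * V s')
    (hVleast : ∀ g : S → ℝ, (∀ s, g s ∈ Set.Icc (0 : ℝ) 1) →
      (∀ s ∈ F, g s = 1) → (∀ s ∈ Z, g s = 0) →
      (∀ s ∈ SUnk, g s = ∑ s', M.P s s' * g s') → ∀ s, V s ≤ g s)
    (k : ℕ) (hstaylt : ∀ s ∈ SUnk, stay k s < 1) :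
    ∀ s ∈ SUnk,
      reach k s + stay k s * SUnk.inf' hne (fun s' => reach k s' / (1 - stay k s')) ≤ V s ∧
        V s ≤ reach k s + stay k s * SUnk.sup' hne (fun s' => reach k s' / (1 - stay k s')) := by
  classical
  have hmem : ∀ t : S, t ∈ F ∨ t ∈ Z ∨ t ∈ SUnk := by
    intro t
    by_cases h1 : t ∈ F
    · exact Or.inl h1
    by_cases h2 : t ∈ Z
    · exact Or.inr (Or.inl h2)
    · right; right; simp [hSUnk, h1, h2]
  -- nonnegativity of stay
  have hnn : ∀ n, ∀ t : S, 0 ≤ stay n t := by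
    intro n
    induction n with
    | zero =>
      intro t
      rcases hmem t with h | h | h
      · rw [(hF 0 t h).2]
      · rw [(hZ 0 t h).2]
      · rw [(h0 t h).2]; norm_num
    | succ n ih =>
      intro t
      rcases hmem t with h | h | h
      · rw [(hF (n+1) t h).2]
      · rw [(hZ (n+1) t h).2]
      · rw [hstay n t h]
        exact Finset.sum_nonneg fun s' _ => mul_nonneg (M.nonneg t s') (ih s')
  set m := SUnk.inf' hne V with hm
  set Mx := SUnk.sup' hne V with hMx
  -- key induction: V bounded by reach + stay * (min/max of V on SUnk)
  have key : ∀ n, ∀ t : S, reach n t + stay n t * m ≤ V t ∧ V t ≤ reach n t + stay n t * Mx := by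
    intro n
    induction n with
    | zero =>
      intro t
      rcases hmem t with h | h | h
      · obtain ⟨h1, h2⟩ := hF 0 t h
        rw [hVF t h, h1, h2]; norm_num
      · obtain ⟨h1, h2⟩ := hZ 0 t h
        rw [hVZ t h, h1, h2]; norm_num
      · obtain ⟨h1, h2⟩ := h0 t h
        rw [h1, h2]
        simpa using ⟨Finset.inf'_le V h, Finset.le_sup' V h⟩
    | succ n ih =>
      intro t
      rcases hmem t with h | h | h
      · obtain ⟨h1, h2⟩ := hF (n+1) t h
        rw [hVF t h, h1, h2]; norm_num
      · obtain ⟨h1, h2⟩ := hZ (n+1) t h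
        rw [hVZ t h, h1, h2]; norm_num
      · rw [hVU t h, hreach n t h, hstay n t h]
        have expand : ∀ c : ℝ,
            ∑ s', M.P t s' * reach n s' + (∑ s', M.P t s' * stay n s') * c
              = ∑ s', M.P t s' * (reach n s' + stay n s' * c) := by
          intro c
          rw [Finset.sum_mul, ← Finset.sum_add_distrib]
          congr 1; ext s'
          ring
        constructor
        · rw [expand m]
          exact Finset.sum_le_sum fun s' _ =>
            mul_le_mul_of_nonneg_left (ih s').1 (M.nonneg t s')
        · rw [expand Mx]
          exact Finset.sum_le_sum fun s' _ =>
            mul_le_mul_of_nonneg_left (ih s').2 (M.nonneg t s')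
  -- l_k ≤ m
  have hl : SUnk.inf' hne (fun s' => reach k s' / (1 - stay k s')) ≤ m := by
    obtain ⟨t0, ht0, hmt0⟩ := SUnk.exists_mem_eq_inf' hne V
    have hpos : 0 < 1 - stay k t0 := by linarith [hstaylt t0 ht0]
    have h1 : reach k t0 + stay k t0 * m ≤ m := by
      have h1' := (key k t0).1
      have : m = V t0 := hm.trans hmt0
      linarith
    have h2 : reach k t0 / (1 - stay k t0) ≤ m := by
      rw [div_le_iff₀ hpos]; nlinarith
    exact le_trans (Finset.inf'_le (fun s' => reach k s' / (1 - stay k s')) ht0) h2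
  -- Mx ≤ u_k
  have hu : Mx ≤ SUnk.sup' hne (fun s' => reach k s' / (1 - stay k s')) := by
    obtain ⟨t0, ht0, hmt0⟩ := SUnk.exists_mem_eq_sup' hne V
    have hpos : 0 < 1 - stay k t0 := by linarith [hstaylt t0 ht0]
    have h1 : Mx ≤ reach k t0 + stay k t0 * Mx := by
      have h1' := (key k t0).2
      have : Mx = V t0 := hMx.trans hmt0
      linarith
    have h2 : Mx ≤ reach k t0 / (1 - stay k t0) := by
      rw [le_div_iff₀ hpos]; nlinarith
    exact le_trans h2 (Finset.le_sup' (fun s' => reach k s' / (1 - stay k s')) ht0)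
  intro s hs
  have hsnn := hnn k s
  constructor
  · calc reach k s + stay k s * SUnk.inf' hne (fun s' => reach k s' / (1 - stay k s'))
        ≤ reach k s + stay k s * m := by nlinarith
      _ ≤ V s := (key k s).1
  · calc V s ≤ reach k s + stay k s * Mx := (key k s).2
      _ ≤ reach k s + stay k s * SUnk.sup' hne (fun s' => reach k s' / (1 - stay k s')) := by
          nlinarith
end

section
/- (Static-bounds correctness, Lemma A.1.) Fix a finite stochastic game with partition (F, Z, S?) and value V = lfp B, and fix constants l, u ∈ [0,1] with l ≤ V(s) ≤ u for all s ∈ S?. Define reach_k, stay_k : S → ℝ recursively: reach_k = 1 and stay_k = 0 on F for all k; reach_k = stay_k = 0 on Z for all k; reach_0 = 0 and stay_0 = 1 on S?; and for each k and each s ∈ S?, choose any action α_{k+1}(s) ∈ Av(s) that maximizes a ↦ ∑_{s'} δ(s,a,s')·(reach_k(s') + stay_k(s')·u) over Av(s) if s ∈ S_Box, and minimizes a ↦ ∑_{s'} δ(s,a,s')·(reach_k(s') + stay_k(s')·l) if s ∈ S_Circ; then set reach_{k+1}(s) = ∑_{s'} δ(s,α_{k+1}(s),s')·reach_k(s') and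 stay_{k+1}(s) = ∑_{s'} δ(s,α_{k+1}(s),s')·stay_k(s'). Then for every k ≥ 0 and every s ∈ S?: reach_k(s) + stay_k(s)·l ≤ V(s) ≤ reach_k(s) + stay_k(s)·u. -/
/-- A finite (turn-based simple) stochastic game with a partition of the state
space into Maximizer states `SBox` (the rest being Minimizer states), target
states `F`, sink states `Z`, and the remaining unknown states `S \ (F ∪ Z)`. -/
structure SG (S A : Type) [Fintype S] [DecidableEq S] where
  /-- Maximizer states; all other states belong to Minimizer. -/
  SBox : Finset S
  /-- Target states. -/
  F : Finset S
  /-- Sink states. -/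
  Z : Finset S
  hFZ : Disjoint F Z
  /-- Available actions (a nonempty finite set in each state). -/
  Av : S → Finset A
  Av_ne : ∀ s, (Av s).Nonempty
  /-- Transition probabilities. -/
  δ : S → A → S → ℝ
  δ_nonneg : ∀ s a s', 0 ≤ δ s a s'
  δ_sum : ∀ s, ∀ a ∈ Av s, ∑ s', δ s a s' = 1

namespace SG

variable {S A : Type} [Fintype S] [DecidableEq S]

/-- The unknown states `S? = S \ (F ∪ Z)`. -/
def SUnk (G : SG S A) : Finset S := Finset.univ \ (G.F ∪ G.Z)

/-- The Bellman operator: `1` on targets, `0` on sinks, max over available actions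
in Maximizer states and min over available actions in Minimizer states. -/
noncomputable def bellman (G : SG S A) (g : S → ℝ) : S → ℝ := fun s =>
  if s ∈ G.F then 1
  else if s ∈ G.Z then 0
  else if s ∈ G.SBox then (G.Av s).sup' (G.Av_ne s) fun a => ∑ s', G.δ s a s' * g s'
  else (G.Av s).inf' (G.Av_ne s) fun a => ∑ s', G.δ s a s' * g s'

/-- `V` is the value of the game: the least fixed point of the Bellman operator
among functions `S → [0,1]`. -/
def IsValue (G : SG S A) (V : S → ℝ) : Prop :=
  (∀ s, V s ∈ Set.Icc (0 : ℝ) 1) ∧ G.bellman V = V ∧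
    ∀ g : S → ℝ, (∀ s, g s ∈ Set.Icc (0 : ℝ) 1) → G.bellman g = g → ∀ s, V s ≤ g s

/-- `T` is an end component: there is a nonempty set of actions `B'` available in `T`
that stays inside `T`, and using which every state of `T` can reach every other. -/
def IsEC (G : SG S A) (T : Set S) : Prop :=
  T.Nonempty ∧ ∃ B' : Set A, B'.Nonempty ∧ (B' ⊆ ⋃ s ∈ T, (G.Av s : Set A)) ∧
    (∀ s ∈ T, ∀ a ∈ B', a ∈ G.Av s → ∀ s', 0 < G.δ s a s' → s' ∈ T) ∧
    (∀ s ∈ T, ∀ s' ∈ T, Relation.ReflTransGen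
      (fun x y => x ∈ T ∧ ∃ a ∈ B', a ∈ G.Av x ∧ 0 < G.δ x a y) s s')

end SG

/-- Static-bounds correctness (Lem. A.1): given constants `l ≤ V ≤ u` on `S?` and the
SVI recursion for `reach_k`, `stay_k` with `(k+1)`-st actions chosen to maximize
(Maximizer states) resp. minimize (Minimizer states) `reach_k + stay_k·u` resp.
`reach_k + stay_k·l`, we have
`reach_k(s) + stay_k(s)·l ≤ V(s) ≤ reach_k(s) + stay_k(s)·u` for all `k` and `s ∈ S?`. -/
theorem svi_static_bounds_correct {S A : Type} [Fintype S] [DecidableEq S]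
    (G : SG S A) (V : S → ℝ) (hV : G.IsValue V)
    (l u : ℝ) (hl01 : l ∈ Set.Icc (0 : ℝ) 1) (hu01 : u ∈ Set.Icc (0 : ℝ) 1)
    (hlu : ∀ s ∈ G.SUnk, l ≤ V s ∧ V s ≤ u)
    (reach stay : ℕ → S → ℝ) (α : ℕ → S → A)
    (hF : ∀ k, ∀ s ∈ G.F, reach k s = 1 ∧ stay k s = 0)
    (hZ : ∀ k, ∀ s ∈ G.Z, reach k s = 0 ∧ stay k s = 0)
    (h0 : ∀ s ∈ G.SUnk, reach 0 s = 0 ∧ stay 0 s = 1)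
    (hαAv : ∀ k, ∀ s ∈ G.SUnk, α (k + 1) s ∈ G.Av s)
    (hαmax : ∀ k, ∀ s ∈ G.SUnk, s ∈ G.SBox → ∀ a ∈ G.Av s,
      ∑ s', G.δ s a s' * (reach k s' + stay k s' * u) ≤
        ∑ s', G.δ s (α (k + 1) s) s' * (reach k s' + stay k s' * u))
    (hαmin : ∀ k, ∀ s ∈ G.SUnk, s ∉ G.SBox → ∀ a ∈ G.Av s,
      ∑ s', G.δ s (α (k + 1) s) s' * (reach k s' + stay k s' * l) ≤
        ∑ s', G.δ s a s' * (reach k s' + stay k s' * l))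
    (hreach : ∀ k, ∀ s ∈ G.SUnk,
      reach (k + 1) s = ∑ s', G.δ s (α (k + 1) s) s' * reach k s')
    (hstay : ∀ k, ∀ s ∈ G.SUnk,
      stay (k + 1) s = ∑ s', G.δ s (α (k + 1) s) s' * stay k s') :
    ∀ k, ∀ s ∈ G.SUnk,
      reach k s + stay k s * l ≤ V s ∧ V s ≤ reach k s + stay k s * u := by
  obtain ⟨hV01, hVfix, -⟩ := hV
  have hVF : ∀ s ∈ G.F, V s = 1 := by
    intro s hsF
    have h := congrFun hVfix s
    rw [SG.bellman] at h
    simpa [hsF] using h.symm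
  have hVZ : ∀ s ∈ G.Z, V s = 0 := by
    intro s hsZ
    have hsF : s ∉ G.F := fun h => (Finset.disjoint_left.mp G.hFZ) h hsZ
    have h := congrFun hVfix s
    rw [SG.bellman] at h
    simpa [hsF, hsZ] using h.symm
  intro k
  induction k with
  | zero =>
    intro s hs
    obtain ⟨hr, hst⟩ := h0 s hs
    obtain ⟨h1, h2⟩ := hlu s hs
    rw [hr, hst]
    constructor <;> linarith
  | succ k ih =>
    intro s hs
    have hsFZ := Finset.mem_sdiff.mp hs
    have hsF : s ∉ G.F := fun h => hsFZ.2 (Finset.mem_union_left _ h)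
    have hsZ : s ∉ G.Z := fun h => hsFZ.2 (Finset.mem_union_right _ h)
    have hpt : ∀ s', reach k s' + stay k s' * l ≤ V s' ∧
        V s' ≤ reach k s' + stay k s' * u := by
      intro s'
      by_cases hF' : s' ∈ G.F
      · obtain ⟨hr, hst⟩ := hF k s' hF'
        rw [hr, hst, hVF s' hF']; constructor <;> simp
      · by_cases hZ' : s' ∈ G.Z
        · obtain ⟨hr, hst⟩ := hZ k s' hZ'
          rw [hr, hst, hVZ s' hZ']; simp
        · exact ih s' (by simp [SG.SUnk, hF', hZ'])
    have hα := hαAv k s hs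
    -- sum comparisons for any available action a
    have hlowa : ∀ a, ∑ s', G.δ s a s' * (reach k s' + stay k s' * l) ≤
        ∑ s', G.δ s a s' * V s' := by
      intro a
      refine Finset.sum_le_sum fun s' _ => ?_
      exact mul_le_mul_of_nonneg_left (hpt s').1 (G.δ_nonneg s a s')
    have hupa : ∀ a, ∑ s', G.δ s a s' * V s' ≤
        ∑ s', G.δ s a s' * (reach k s' + stay k s' * u) := by
      intro a
      refine Finset.sum_le_sum fun s' _ => ?_
      exact mul_le_mul_of_nonneg_left (hpt s').2 (G.δ_nonneg s a s')
    have hsplit : ∀ a (x : ℝ), ∑ s', G.δ s a s' * (reach k s' + stay k s' * x) =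
        (∑ s', G.δ s a s' * reach k s') + (∑ s', G.δ s a s' * stay k s') * x := by
      intro a x
      rw [Finset.sum_mul, ← Finset.sum_add_distrib]
      refine Finset.sum_congr rfl fun s' _ => by ring
    have hreach' := hreach k s hs
    have hstay' := hstay k s hs
    have hVs := (congrFun hVfix s).symm
    rw [SG.bellman, if_neg hsF, if_neg hsZ] at hVs
    by_cases hB : s ∈ G.SBox
    · rw [if_pos hB] at hVs
      constructor
      · -- lower bound: sup' ≥ value at α ≥ reach+stay*l
        have h1 : ∑ s', G.δ s (α (k+1) s) s' * (reach k s' + stay k s' * l) ≤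
            ∑ s', G.δ s (α (k+1) s) s' * V s' := hlowa _
        have h2 := Finset.le_sup' (fun a => ∑ s', G.δ s a s' * V s') hα
        rw [hVs, hreach', hstay']
        calc _ = ∑ s', G.δ s (α (k+1) s) s' * (reach k s' + stay k s' * l) :=
              (hsplit _ l).symm
          _ ≤ _ := le_trans h1 h2
      · -- upper bound
        rw [hVs, hreach', hstay']
        refine Finset.sup'_le _ _ fun a ha => ?_
        calc ∑ s', G.δ s a s' * V s' ≤
              ∑ s', G.δ s a s' * (reach k s' + stay k s' * u) := hupa a
          _ ≤ ∑ s', G.δ s (α (k+1) s) s' * (reach k s' + stay k s' * u) :=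
              hαmax k s hs hB a ha
          _ = _ := hsplit _ u
    · rw [if_neg hB] at hVs
      constructor
      · rw [hVs, hreach', hstay']
        refine Finset.le_inf' _ _ fun a ha => ?_
        calc (∑ s', G.δ s (α (k+1) s) s' * reach k s') +
              (∑ s', G.δ s (α (k+1) s) s' * stay k s') * l
            = ∑ s', G.δ s (α (k+1) s) s' * (reach k s' + stay k s' * l) :=
              (hsplit _ l).symm
          _ ≤ ∑ s', G.δ s a s' * (reach k s' + stay k s' * l) := hαmin k s hs hB a ha
          _ ≤ ∑ s', G.δ s a s' * V s' := hlowa a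
      · rw [hVs, hreach', hstay']
        have h2 := Finset.inf'_le (fun a => ∑ s', G.δ s a s' * V s') hα
        calc _ ≤ ∑ s', G.δ s (α (k+1) s) s' * V s' := h2
          _ ≤ ∑ s', G.δ s (α (k+1) s) s' * (reach k s' + stay k s' * u) := hupa _
          _ = _ := hsplit _ u
end

section
/- (Correctness of the dynamic global bounds, Lemma on l_k and u_k.) Fix a finite stochastic game with partition (F, Z, S?) and value V = lfp B, and let reach_k, stay_k, l_k, u_k, dl_k, du_k be any sequences satisfying the sound-value-iteration recursion described in the context (for some admissible choice functions α_{k+1}). Then for every k ≥ 0 and every s ∈ S?: l_k ≤ V(s) ≤ u_k. -/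
namespace SG

variable {S A : Type} [Fintype S] [DecidableEq S]

open scoped Classical in
/-- Decision value of a Maximizer state `s` with chosen action `α` (w.r.t. one-step
values `reach`, `stay`): the maximum, over actions `β` with
`Δstay(α,β) = ∑(δ(s,α)−δ(s,β))·stay > 0`, of `Δreach(β,α)/Δstay(α,β)`;
defaulting to `0` when no `β` qualifies. -/
noncomputable def dvalBox (G : SG S A) (reach stay : S → ℝ) (s : S) (α : A) : ℝ :=
  let Q := (G.Av s).filter fun β => 0 < ∑ s', (G.δ s α s' - G.δ s β s') * stay s'
  if h : Q.Nonempty then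
    Q.sup' h fun β => (∑ s', (G.δ s β s' - G.δ s α s') * reach s') /
      (∑ s', (G.δ s α s' - G.δ s β s') * stay s')
  else 0

open scoped Classical in
/-- Decision value of a Minimizer state `s` with chosen action `α`: the minimum, over
actions `β` with `Δstay(α,β) > 0`, of `Δreach(β,α)/Δstay(α,β)`; defaulting to `1`. -/
noncomputable def dvalCirc (G : SG S A) (reach stay : S → ℝ) (s : S) (α : A) : ℝ :=
  let Q := (G.Av s).filter fun β => 0 < ∑ s', (G.δ s α s' - G.δ s β s') * stay s'
  if h : Q.Nonempty then
    Q.inf' h fun β => (∑ s', (G.δ s β s' - G.δ s α s') * reach s') /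
      (∑ s', (G.δ s α s' - G.δ s β s') * stay s')
  else 1

open scoped Classical in
/-- The sound-value-iteration recursion for stochastic games: step-bounded
probabilities `reach_k`, `stay_k` under `k`-step optimal action choices `α`,
dynamic global bounds `l_k ≤ u_k` and decision values `dl_k`, `du_k`. -/
def SVIRec (G : SG S A) (hne : G.SUnk.Nonempty)
    (reach stay : ℕ → S → ℝ) (α : ℕ → S → A) (l u dl du : ℕ → ℝ) : Prop :=
  (∀ k, ∀ s ∈ G.F, reach k s = 1 ∧ stay k s = 0) ∧
  (∀ k, ∀ s ∈ G.Z, reach k s = 0 ∧ stay k s = 0) ∧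
  (∀ s ∈ G.SUnk, reach 0 s = 0 ∧ stay 0 s = 1) ∧
  l 0 = 0 ∧ u 0 = 1 ∧ du 0 = 0 ∧ dl 0 = 1 ∧
  (∀ k, ∀ s ∈ G.SUnk, α (k + 1) s ∈ G.Av s) ∧
  (∀ k, ∀ s ∈ G.SUnk, s ∈ G.SBox → ∀ a ∈ G.Av s,
      ∑ s', G.δ s a s' * (reach k s' + stay k s' * u k) ≤
        ∑ s', G.δ s (α (k + 1) s) s' * (reach k s' + stay k s' * u k)) ∧
  (∀ k, ∀ s ∈ G.SUnk, s ∉ G.SBox → ∀ a ∈ G.Av s,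
      ∑ s', G.δ s (α (k + 1) s) s' * (reach k s' + stay k s' * l k) ≤
        ∑ s', G.δ s a s' * (reach k s' + stay k s' * l k)) ∧
  (∀ k, ∀ s ∈ G.SUnk, reach (k + 1) s = ∑ s', G.δ s (α (k + 1) s) s' * reach k s') ∧
  (∀ k, ∀ s ∈ G.SUnk, stay (k + 1) s = ∑ s', G.δ s (α (k + 1) s) s' * stay k s') ∧
  (∀ k, du (k + 1) = if h : (G.SUnk ∩ G.SBox).Nonempty
      then max (du k)
        ((G.SUnk ∩ G.SBox).sup' h fun s => G.dvalBox (reach k) (stay k) s (α (k + 1) s))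
      else du k) ∧
  (∀ k, dl (k + 1) = if h : (G.SUnk \ G.SBox).Nonempty
      then min (dl k)
        ((G.SUnk \ G.SBox).inf' h fun s => G.dvalCirc (reach k) (stay k) s (α (k + 1) s))
      else dl k) ∧
  (∀ k, u (k + 1) = if ∀ s ∈ G.SUnk, stay (k + 1) s < 1
      then min (u k) (max (du (k + 1))
        (G.SUnk.sup' hne fun s => reach (k + 1) s / (1 - stay (k + 1) s)))
      else u k) ∧
  (∀ k, l (k + 1) = if ∀ s ∈ G.SUnk, stay (k + 1) s < 1
      then max (l k) (min (dl (k + 1))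
        (G.SUnk.inf' hne fun s => reach (k + 1) s / (1 - stay (k + 1) s)))
      else l k)

end SG

section Helpers

variable {S A : Type} [Fintype S] [DecidableEq S]

/-- Algebraic identity used to rearrange one-step inequalities. -/
private lemma svi_sum_id (p q r st : S → ℝ) (z : ℝ) :
    (∑ s', (q s' - p s') * r s') - (∑ s', (p s' - q s') * st s') * z
      = (∑ s', q s' * (r s' + st s' * z)) - ∑ s', p s' * (r s' + st s' * z) := by
  simp only [sub_mul, mul_add, Finset.sum_sub_distrib, Finset.sum_add_distrib,
    Finset.sum_mul, mul_assoc]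
  ring

/-- Decision-value lemma, Maximizer form: if `p` (the chosen action's distribution)
beats `q` w.r.t. value `y`, and `x ≤ y`, and the decision-value ratio bounds `x`
from below whenever the stay-difference is positive, then `p` beats `q` w.r.t. `x`. -/
private lemma svi_swap_le (p q r st : S → ℝ) (x y : ℝ) (hxy : x ≤ y)
    (hgreedy : ∑ s', q s' * (r s' + st s' * y) ≤ ∑ s', p s' * (r s' + st s' * y))
    (hdv : 0 < ∑ s', (p s' - q s') * st s' →
      (∑ s', (q s' - p s') * r s') / (∑ s', (p s' - q s') * st s') ≤ x) :
    ∑ s', q s' * (r s' + st s' * x) ≤ ∑ s', p s' * (r s' + st s' * x) := by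
  have h1 := svi_sum_id p q r st y
  have h2 := svi_sum_id p q r st x
  rcases le_or_gt (∑ s', (p s' - q s') * st s') 0 with h | h
  · have hm := mul_le_mul_of_nonpos_left hxy h
    linarith
  · have h3 := hdv h
    rw [div_le_iff₀ h] at h3
    rw [mul_comm] at h3
    linarith

/-- Decision-value lemma, Minimizer form. -/
private lemma svi_swap_ge (p q r st : S → ℝ) (x y : ℝ) (hxy : y ≤ x)
    (hgreedy : ∑ s', p s' * (r s' + st s' * y) ≤ ∑ s', q s' * (r s' + st s' * y))
    (hdv : 0 < ∑ s', (p s' - q s') * st s' →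
      x ≤ (∑ s', (q s' - p s') * r s') / (∑ s', (p s' - q s') * st s')) :
    ∑ s', p s' * (r s' + st s' * x) ≤ ∑ s', q s' * (r s' + st s' * x) := by
  have h1 := svi_sum_id p q r st y
  have h2 := svi_sum_id p q r st x
  rcases le_or_gt (∑ s', (p s' - q s') * st s') 0 with h | h
  · have hm := mul_le_mul_of_nonpos_left hxy h
    linarith
  · have h3 := hdv h
    rw [le_div_iff₀ h] at h3
    rw [mul_comm] at h3
    linarith

private lemma svi_dvalBox_ge (G : SG S A) (r st : S → ℝ) (s : S) (a b : A)
    (hb : b ∈ G.Av s) (hpos : 0 < ∑ t, (G.δ s a t - G.δ s b t) * st t) :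
    (∑ t, (G.δ s b t - G.δ s a t) * r t) /
      (∑ t, (G.δ s a t - G.δ s b t) * st t) ≤ G.dvalBox r st s a := by
  simp only [SG.dvalBox]
  split
  · next h =>
    exact Finset.le_sup' (f := fun β => (∑ s' : S, (G.δ s β s' - G.δ s a s') * r s') /
      ∑ s' : S, (G.δ s a s' - G.δ s β s') * st s') (Finset.mem_filter.mpr ⟨hb, hpos⟩)
  · next h => exact absurd ⟨b, Finset.mem_filter.mpr ⟨hb, hpos⟩⟩ h

private lemma svi_dvalCirc_le (G : SG S A) (r st : S → ℝ) (s : S) (a b : A)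
    (hb : b ∈ G.Av s) (hpos : 0 < ∑ t, (G.δ s a t - G.δ s b t) * st t) :
    G.dvalCirc r st s a ≤ (∑ t, (G.δ s b t - G.δ s a t) * r t) /
      (∑ t, (G.δ s a t - G.δ s b t) * st t) := by
  simp only [SG.dvalCirc]
  split
  · next h =>
    exact Finset.inf'_le (f := fun β => (∑ s' : S, (G.δ s β s' - G.δ s a s') * r s') /
      ∑ s' : S, (G.δ s a s' - G.δ s β s') * st s') (Finset.mem_filter.mpr ⟨hb, hpos⟩)
  · next h => exact absurd ⟨b, Finset.mem_filter.mpr ⟨hb, hpos⟩⟩ h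

end Helpers

/-- Correctness of the dynamic global bounds: along any run of the
sound-value-iteration recursion, `l_k ≤ V(s) ≤ u_k` for every `k` and `s ∈ S?`. -/
theorem svi_global_bounds_correct {S A : Type} [Fintype S] [DecidableEq S]
    (G : SG S A) (V : S → ℝ) (hV : G.IsValue V)
    (hne : G.SUnk.Nonempty)
    (reach stay : ℕ → S → ℝ) (α : ℕ → S → A) (l u dl du : ℕ → ℝ)
    (hrec : G.SVIRec hne reach stay α l u dl du) :
    ∀ k, ∀ s ∈ G.SUnk, l k ≤ V s ∧ V s ≤ u k := by
  classical
  obtain ⟨hVmem, hVfix, -⟩ := hV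
  obtain ⟨hF, hZ, h0, hl0, hu0, hdu0, hdl0, hαmem, hboxg, hcircg, hreach, hstay,
    hdu, hdl, hu, hl⟩ := hrec
  have hmemU : ∀ t : S, t ∉ G.F → t ∉ G.Z → t ∈ G.SUnk := by
    intro t h1 h2
    simp [SG.SUnk, h1, h2]
  have hUF : ∀ t ∈ G.SUnk, t ∉ G.F ∧ t ∉ G.Z := by
    intro t ht
    simpa [SG.SUnk, not_or] using ht
  have hVF : ∀ t ∈ G.F, V t = 1 := by
    intro t ht
    have h := congrFun hVfix t
    simp only [SG.bellman, if_pos ht] at h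
    exact h.symm
  have hVZ : ∀ t ∈ G.Z, V t = 0 := by
    intro t ht
    have htF : t ∉ G.F := Finset.disjoint_right.mp G.hFZ ht
    have h := congrFun hVfix t
    simp only [SG.bellman, if_neg htF, if_pos ht] at h
    exact h.symm
  have hVbox : ∀ t ∈ G.SUnk, t ∈ G.SBox →
      V t = (G.Av t).sup' (G.Av_ne t) fun a => ∑ s', G.δ t a s' * V s' := by
    intro t ht htB
    obtain ⟨htF, htZ⟩ := hUF t ht
    have h := congrFun hVfix t
    simp only [SG.bellman, if_neg htF, if_neg htZ, if_pos htB] at h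
    exact h.symm
  have hVcirc : ∀ t ∈ G.SUnk, t ∉ G.SBox →
      V t = (G.Av t).inf' (G.Av_ne t) fun a => ∑ s', G.δ t a s' * V s' := by
    intro t ht htB
    obtain ⟨htF, htZ⟩ := hUF t ht
    have h := congrFun hVfix t
    simp only [SG.bellman, if_neg htF, if_neg htZ, if_neg htB] at h
    exact h.symm
  have hlm : Monotone l := monotone_nat_of_le_succ fun n => by
    rw [hl n]; split_ifs with h
    · exact le_max_left _ _
    · exact le_rfl
  have hum : Antitone u := antitone_nat_of_succ_le fun n => by
    rw [hu n]; split_ifs with h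
    · exact min_le_left _ _
    · exact le_rfl
  have hdum : Monotone du := monotone_nat_of_le_succ fun n => by
    rw [hdu n]; split_ifs with h
    · exact le_max_left _ _
    · exact le_rfl
  have hdlm : Antitone dl := antitone_nat_of_succ_le fun n => by
    rw [hdl n]; split_ifs with h
    · exact min_le_left _ _
    · exact le_rfl
  have hduB : ∀ m, ∀ t ∈ G.SUnk, t ∈ G.SBox →
      G.dvalBox (reach m) (stay m) t (α (m+1) t) ≤ du (m+1) := by
    intro m t ht htB
    have hm : t ∈ G.SUnk ∩ G.SBox := Finset.mem_inter.mpr ⟨ht, htB⟩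
    rw [hdu m]
    split
    · next h => exact le_max_of_le_right (Finset.le_sup'
        (f := fun t => G.dvalBox (reach m) (stay m) t (α (m+1) t)) hm)
    · next h => exact absurd ⟨t, hm⟩ h
  have hdlB : ∀ m, ∀ t ∈ G.SUnk, t ∉ G.SBox →
      dl (m+1) ≤ G.dvalCirc (reach m) (stay m) t (α (m+1) t) := by
    intro m t ht htB
    have hm : t ∈ G.SUnk \ G.SBox := Finset.mem_sdiff.mpr ⟨ht, htB⟩
    rw [hdl m]
    split
    · next h => exact min_le_of_right_le (Finset.inf'_le
        (f := fun t => G.dvalCirc (reach m) (stay m) t (α (m+1) t)) hm)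
    · next h => exact absurd ⟨t, hm⟩ h
  have hlin : ∀ m (x : ℝ), ∀ t ∈ G.SUnk,
      reach (m+1) t + stay (m+1) t * x
        = ∑ s', G.δ t (α (m+1) t) s' * (reach m s' + stay m s' * x) := by
    intro m x t ht
    rw [hreach m t ht, hstay m t ht, Finset.sum_mul, ← Finset.sum_add_distrib]
    exact Finset.sum_congr rfl fun s' _ => by ring
  have hsmono : ∀ (t : S) (a : A) (f g : S → ℝ), (∀ s', f s' ≤ g s') →
      ∑ s', G.δ t a s' * f s' ≤ ∑ s', G.δ t a s' * g s' := fun t a f g hfg =>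
    Finset.sum_le_sum fun s' _ => mul_le_mul_of_nonneg_left (hfg s') (G.δ_nonneg t a s')
  intro k
  induction k with
  | zero =>
    intro s hs
    constructor
    · rw [hl0]; exact (Set.mem_Icc.mp (hVmem s)).1
    · rw [hu0]; exact (Set.mem_Icc.mp (hVmem s)).2
  | succ k IH =>
    have hUk : ∀ m, m ≤ k → ∀ t ∈ G.SUnk, V t ≤ u m :=
      fun m hm t ht => le_trans (IH t ht).2 (hum hm)
    have hLk : ∀ m, m ≤ k → ∀ t ∈ G.SUnk, l m ≤ V t :=
      fun m hm t ht => le_trans (hlm hm) (IH t ht).1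
    have hupper : ∀ s ∈ G.SUnk, V s ≤ u (k+1) := by
      intro s hs
      rw [hu k]
      split_ifs with hcond
      · refine le_min (hUk k le_rfl s hs) ?_
        obtain ⟨sM, hsM, hCeq⟩ := Finset.exists_mem_eq_sup' hne V
        have hVC : ∀ t ∈ G.SUnk, V t ≤ V sM := fun t ht => hCeq ▸ Finset.le_sup' V ht
        rcases le_or_gt (V sM) (du (k+1)) with hcase | hcase
        · exact le_trans (hVC s hs) (le_trans hcase (le_max_left _ _))
        · have key : ∀ m, m ≤ k + 1 → ∀ t, V t ≤ reach m t + stay m t * V sM := by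
            intro m
            induction m with
            | zero =>
              intro _ t
              by_cases htF : t ∈ G.F
              · rw [hVF t htF, (hF 0 t htF).1, (hF 0 t htF).2]; norm_num
              · by_cases htZ : t ∈ G.Z
                · rw [hVZ t htZ, (hZ 0 t htZ).1, (hZ 0 t htZ).2]; norm_num
                · have htU : t ∈ G.SUnk := hmemU t htF htZ
                  rw [(h0 t htU).1, (h0 t htU).2]
                  have := hVC t htU
                  linarith
            | succ m ihm =>
              intro hm1 t
              have hmk : m ≤ k := Nat.le_of_succ_le_succ hm1
              have ihm' := ihm (Nat.le_of_succ_le hm1)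
              by_cases htF : t ∈ G.F
              · rw [hVF t htF, (hF (m+1) t htF).1, (hF (m+1) t htF).2]; norm_num
              · by_cases htZ : t ∈ G.Z
                · rw [hVZ t htZ, (hZ (m+1) t htZ).1, (hZ (m+1) t htZ).2]; norm_num
                · have htU : t ∈ G.SUnk := hmemU t htF htZ
                  rw [hlin m (V sM) t htU]
                  by_cases htB : t ∈ G.SBox
                  · obtain ⟨aM, haM, hAeq⟩ :=
                      Finset.exists_mem_eq_sup' (G.Av_ne t) fun a => ∑ s', G.δ t a s' * V s'
                    have hswap : ∑ s', G.δ t aM s' * (reach m s' + stay m s' * V sM) ≤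
                        ∑ s', G.δ t (α (m+1) t) s' * (reach m s' + stay m s' * V sM) := by
                      refine svi_swap_le _ _ _ _ _ (u m) (hUk m hmk sM hsM)
                        (hboxg m t htU htB aM haM) ?_
                      intro hpos
                      refine le_trans
                        (svi_dvalBox_ge G (reach m) (stay m) t (α (m+1) t) aM haM hpos) ?_
                      exact le_trans (hduB m t htU htB)
                        (le_trans (hdum (Nat.succ_le_succ hmk)) hcase.le)
                    calc V t = ∑ s', G.δ t aM s' * V s' := (hVbox t htU htB).trans hAeq
                      _ ≤ ∑ s', G.δ t aM s' * (reach m s' + stay m s' * V sM) :=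
                          hsmono t aM _ _ ihm'
                      _ ≤ _ := hswap
                  · have h1 : V t ≤ ∑ s', G.δ t (α (m+1) t) s' * V s' := by
                      rw [hVcirc t htU htB]
                      exact Finset.inf'_le (f := fun a => ∑ s', G.δ t a s' * V s')
                        (hαmem m t htU)
                    exact le_trans h1 (hsmono t _ _ _ ihm')
          have hst : stay (k+1) sM < 1 := hcond sM hsM
          have h1 := key (k+1) le_rfl sM
          have h2 : V sM ≤ reach (k+1) sM / (1 - stay (k+1) sM) := by
            rw [le_div_iff₀ (by linarith)]
            nlinarith
          refine le_trans (hVC s hs) (le_trans ?_ (le_max_right _ _))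
          exact le_trans h2 (Finset.le_sup'
            (f := fun t => reach (k+1) t / (1 - stay (k+1) t)) hsM)
      · exact hUk k le_rfl s hs
    have hlower : ∀ s ∈ G.SUnk, l (k+1) ≤ V s := by
      intro s hs
      rw [hl k]
      split_ifs with hcond
      · refine max_le (hLk k le_rfl s hs) ?_
        obtain ⟨sm, hsm, hceq⟩ := Finset.exists_mem_eq_inf' hne V
        have hcV : ∀ t ∈ G.SUnk, V sm ≤ V t := fun t ht => hceq ▸ Finset.inf'_le V ht
        rcases le_or_gt (dl (k+1)) (V sm) with hcase | hcase
        · exact le_trans (min_le_left _ _) (le_trans hcase (hcV s hs))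
        · have key : ∀ m, m ≤ k + 1 → ∀ t, reach m t + stay m t * V sm ≤ V t := by
            intro m
            induction m with
            | zero =>
              intro _ t
              by_cases htF : t ∈ G.F
              · rw [hVF t htF, (hF 0 t htF).1, (hF 0 t htF).2]; norm_num
              · by_cases htZ : t ∈ G.Z
                · rw [hVZ t htZ, (hZ 0 t htZ).1, (hZ 0 t htZ).2]; norm_num
                · have htU : t ∈ G.SUnk := hmemU t htF htZ
                  rw [(h0 t htU).1, (h0 t htU).2]
                  have := hcV t htU
                  linarith
            | succ m ihm =>
              intro hm1 t
              have hmk : m ≤ k := Nat.le_of_succ_le_succ hm1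
              have ihm' := ihm (Nat.le_of_succ_le hm1)
              by_cases htF : t ∈ G.F
              · rw [hVF t htF, (hF (m+1) t htF).1, (hF (m+1) t htF).2]; norm_num
              · by_cases htZ : t ∈ G.Z
                · rw [hVZ t htZ, (hZ (m+1) t htZ).1, (hZ (m+1) t htZ).2]; norm_num
                · have htU : t ∈ G.SUnk := hmemU t htF htZ
                  rw [hlin m (V sm) t htU]
                  by_cases htB : t ∈ G.SBox
                  · have h1 : ∑ s', G.δ t (α (m+1) t) s' * V s' ≤ V t := by
                      rw [hVbox t htU htB]
                      exact Finset.le_sup' (f := fun a => ∑ s', G.δ t a s' * V s')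
                        (hαmem m t htU)
                    exact le_trans (hsmono t _ _ _ ihm') h1
                  · obtain ⟨am, ham, hAeq⟩ :=
                      Finset.exists_mem_eq_inf' (G.Av_ne t) fun a => ∑ s', G.δ t a s' * V s'
                    have hswap : ∑ s', G.δ t (α (m+1) t) s' * (reach m s' + stay m s' * V sm) ≤
                        ∑ s', G.δ t am s' * (reach m s' + stay m s' * V sm) := by
                      refine svi_swap_ge _ _ _ _ _ (l m) (hLk m hmk sm hsm)
                        (hcircg m t htU htB am ham) ?_
                      intro hpos
                      refine le_trans ?_
                        (svi_dvalCirc_le G (reach m) (stay m) t (α (m+1) t) am ham hpos)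
                      exact le_trans hcase.le
                        (le_trans (hdlm (Nat.succ_le_succ hmk)) (hdlB m t htU htB))
                    calc ∑ s', G.δ t (α (m+1) t) s' * (reach m s' + stay m s' * V sm)
                        ≤ ∑ s', G.δ t am s' * (reach m s' + stay m s' * V sm) := hswap
                      _ ≤ ∑ s', G.δ t am s' * V s' := hsmono t am _ _ ihm'
                      _ = V t := ((hVcirc t htU htB).trans hAeq).symm
          have hst : stay (k+1) sm < 1 := hcond sm hsm
          have h1 := key (k+1) le_rfl sm
          have h2 : reach (k+1) sm / (1 - stay (k+1) sm) ≤ V sm := by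
            rw [div_le_iff₀ (by linarith)]
            nlinarith
          refine le_trans (min_le_right _ _) (le_trans ?_ (hcV s hs))
          exact le_trans (Finset.inf'_le
            (f := fun t => reach (k+1) t / (1 - stay (k+1) t)) hsm) h2
      · exact hLk k le_rfl s hs
    intro s hs
    exact ⟨hlower s hs, hupper s hs⟩
end

section
/- (Sound value iteration for stochastic games without end components — correctness of the approximations, Theorem 3.2.) Fix a finite stochastic game with partition (F, Z, S?) and value V = lfp B, and let reach_k, stay_k, l_k, u_k, dl_k, du_k be any sequences satisfying the sound-value-iteration recursion described in the context (for some admissible choice functions α_{k+1}). Then for every k ≥ 0 and every s ∈ S?: reach_k(s) + stay_k(s)·l_k ≤ V(s) ≤ reach_k(s) + stay_k(s)·u_k. -/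
namespace SG
variable {S A : Type} [Fintype S] [DecidableEq S]

lemma sum_affine (G : SG S A) (r st : S → ℝ) (s : S) (a : A) (x : ℝ) :
    ∑ s', G.δ s a s' * (r s' + st s' * x)
      = (∑ s', G.δ s a s' * r s') + (∑ s', G.δ s a s' * st s') * x := by
  rw [Finset.sum_mul, ← Finset.sum_add_distrib]
  exact Finset.sum_congr rfl fun s' _ => by ring

lemma sum_sub_stay (G : SG S A) (st : S → ℝ) (s : S) (a b : A) :
    ∑ s', (G.δ s a s' - G.δ s b s') * st s'
      = (∑ s', G.δ s a s' * st s') - (∑ s', G.δ s b s' * st s') := by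
  rw [← Finset.sum_sub_distrib]
  exact Finset.sum_congr rfl fun s' _ => by ring

lemma box_dom (G : SG S A) (r st : S → ℝ) (s : S) (αs : A)
    (x u : ℝ) (hxu : x ≤ u) (hdv : G.dvalBox r st s αs ≤ x)
    (hopt : ∀ a ∈ G.Av s, ∑ s', G.δ s a s' * (r s' + st s' * u)
      ≤ ∑ s', G.δ s αs s' * (r s' + st s' * u)) :
    ∀ a ∈ G.Av s, ∑ s', G.δ s a s' * (r s' + st s' * x)
      ≤ ∑ s', G.δ s αs s' * (r s' + st s' * x) := by
  classical
  intro a ha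
  rw [G.sum_affine, G.sum_affine]
  set R1 := ∑ s', G.δ s αs s' * r s' with hR1
  set S1 := ∑ s', G.δ s αs s' * st s' with hS1
  set R2 := ∑ s', G.δ s a s' * r s' with hR2
  set S2 := ∑ s', G.δ s a s' * st s' with hS2
  have hopt' : R2 + S2 * u ≤ R1 + S1 * u := by
    have := hopt a ha
    rwa [G.sum_affine, G.sum_affine] at this
  rcases lt_or_ge 0 (S1 - S2) with hpos | hneg
  · -- a is in the filter
    have hDs : ∑ s', (G.δ s αs s' - G.δ s a s') * st s' = S1 - S2 := G.sum_sub_stay st s αs a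
    have hmem : a ∈ (G.Av s).filter
        (fun β => 0 < ∑ s', (G.δ s αs s' - G.δ s β s') * st s') := by
      rw [Finset.mem_filter]
      exact ⟨ha, by rw [hDs]; exact hpos⟩
    have hQ : ((G.Av s).filter
        (fun β => 0 < ∑ s', (G.δ s αs s' - G.δ s β s') * st s')).Nonempty := ⟨a, hmem⟩
    have hratio : (∑ s', (G.δ s a s' - G.δ s αs s') * r s') /
        (∑ s', (G.δ s αs s' - G.δ s a s') * st s') ≤ G.dvalBox r st s αs := by
      rw [dvalBox]
      simp only [dif_pos hQ]
      exact Finset.le_sup' (fun β => (∑ s', (G.δ s β s' - G.δ s αs s') * r s') /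
        (∑ s', (G.δ s αs s' - G.δ s β s') * st s')) hmem
    have hRs : ∑ s', (G.δ s a s' - G.δ s αs s') * r s' = R2 - R1 := by
      rw [← Finset.sum_sub_distrib]
      exact Finset.sum_congr rfl fun s' _ => by ring
    rw [hRs, hDs] at hratio
    have := hratio.trans hdv
    rw [div_le_iff₀ hpos] at this
    nlinarith
  · nlinarith [mul_nonneg (sub_nonneg.2 hxu) (neg_nonneg.2 (sub_nonpos.2 hneg))]

lemma circ_dom (G : SG S A) (r st : S → ℝ) (s : S) (αs : A)
    (x l : ℝ) (hxl : l ≤ x) (hdv : x ≤ G.dvalCirc r st s αs)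
    (hopt : ∀ a ∈ G.Av s, ∑ s', G.δ s αs s' * (r s' + st s' * l)
      ≤ ∑ s', G.δ s a s' * (r s' + st s' * l)) :
    ∀ a ∈ G.Av s, ∑ s', G.δ s αs s' * (r s' + st s' * x)
      ≤ ∑ s', G.δ s a s' * (r s' + st s' * x) := by
  classical
  intro a ha
  rw [G.sum_affine, G.sum_affine]
  set R1 := ∑ s', G.δ s αs s' * r s' with hR1
  set S1 := ∑ s', G.δ s αs s' * st s' with hS1
  set R2 := ∑ s', G.δ s a s' * r s' with hR2
  set S2 := ∑ s', G.δ s a s' * st s' with hS2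
  have hopt' : R1 + S1 * l ≤ R2 + S2 * l := by
    have := hopt a ha
    rwa [G.sum_affine, G.sum_affine] at this
  rcases lt_or_ge 0 (S1 - S2) with hpos | hneg
  · have hDs : ∑ s', (G.δ s αs s' - G.δ s a s') * st s' = S1 - S2 := G.sum_sub_stay st s αs a
    have hmem : a ∈ (G.Av s).filter
        (fun β => 0 < ∑ s', (G.δ s αs s' - G.δ s β s') * st s') := by
      rw [Finset.mem_filter]
      exact ⟨ha, by rw [hDs]; exact hpos⟩
    have hQ : ((G.Av s).filter
        (fun β => 0 < ∑ s', (G.δ s αs s' - G.δ s β s') * st s')).Nonempty := ⟨a, hmem⟩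
    have hratio : G.dvalCirc r st s αs ≤ (∑ s', (G.δ s a s' - G.δ s αs s') * r s') /
        (∑ s', (G.δ s αs s' - G.δ s a s') * st s') := by
      rw [dvalCirc]
      simp only [dif_pos hQ]
      exact Finset.inf'_le (fun β => (∑ s', (G.δ s β s' - G.δ s αs s') * r s') /
        (∑ s', (G.δ s αs s' - G.δ s β s') * st s')) hmem
    have hRs : ∑ s', (G.δ s a s' - G.δ s αs s') * r s' = R2 - R1 := by
      rw [← Finset.sum_sub_distrib]
      exact Finset.sum_congr rfl fun s' _ => by ring
    rw [hRs, hDs] at hratio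
    have := hdv.trans hratio
    rw [le_div_iff₀ hpos] at this
    nlinarith
  · nlinarith [mul_nonneg (sub_nonneg.2 hxl) (neg_nonneg.2 (sub_nonpos.2 hneg))]

lemma dvalBox_le (G : SG S A) (r st : S → ℝ) (s : S) (αs : A)
    (u : ℝ) (hu : 0 ≤ u)
    (hopt : ∀ a ∈ G.Av s, ∑ s', G.δ s a s' * (r s' + st s' * u)
      ≤ ∑ s', G.δ s αs s' * (r s' + st s' * u)) :
    G.dvalBox r st s αs ≤ u := by
  classical
  rw [dvalBox]
  split_ifs with hQ
  · apply Finset.sup'_le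
    intro b hb
    rw [Finset.mem_filter] at hb
    have hpos := hb.2
    rw [div_le_iff₀ hpos]
    have h1 := hopt b hb.1
    rw [G.sum_affine, G.sum_affine] at h1
    have e1 := G.sum_sub_stay st s αs b
    have e2 := G.sum_sub_stay r s b αs
    rw [e1] at hpos
    rw [e1, e2]
    nlinarith
  · exact hu

lemma dvalCirc_ge (G : SG S A) (r st : S → ℝ) (s : S) (αs : A)
    (l : ℝ) (hl : l ≤ 1)
    (hopt : ∀ a ∈ G.Av s, ∑ s', G.δ s αs s' * (r s' + st s' * l)
      ≤ ∑ s', G.δ s a s' * (r s' + st s' * l)) :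
    l ≤ G.dvalCirc r st s αs := by
  classical
  rw [dvalCirc]
  split_ifs with hQ
  · apply Finset.le_inf'
    intro b hb
    rw [Finset.mem_filter] at hb
    have hpos := hb.2
    rw [le_div_iff₀ hpos]
    have h1 := hopt b hb.1
    rw [G.sum_affine, G.sum_affine] at h1
    have e1 := G.sum_sub_stay st s αs b
    have e2 := G.sum_sub_stay r s b αs
    rw [e1] at hpos
    rw [e1, e2]
    nlinarith
  · exact hl

lemma mem_SUnk (G : SG S A) {s : S} (hs : s ∈ G.SUnk) : s ∉ G.F ∧ s ∉ G.Z := by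
  rw [SUnk, Finset.mem_sdiff, Finset.mem_union] at hs
  exact ⟨fun h => hs.2 (Or.inl h), fun h => hs.2 (Or.inr h)⟩

lemma mem_SUnk_of (G : SG S A) {s : S} (h1 : s ∉ G.F) (h2 : s ∉ G.Z) : s ∈ G.SUnk := by
  rw [SUnk, Finset.mem_sdiff, Finset.mem_union]
  exact ⟨Finset.mem_univ s, fun h => h.elim h1 h2⟩

lemma value_F (G : SG S A) {V : S → ℝ} (hV : G.IsValue V) {s : S} (hs : s ∈ G.F) :
    V s = 1 := by
  conv_lhs => rw [← hV.2.1]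
  rw [bellman, if_pos hs]

lemma value_Z (G : SG S A) {V : S → ℝ} (hV : G.IsValue V) {s : S} (hs : s ∈ G.Z) :
    V s = 0 := by
  have hF : s ∉ G.F := fun h => (Finset.disjoint_left.1 G.hFZ h) hs
  conv_lhs => rw [← hV.2.1]
  rw [bellman, if_neg hF, if_pos hs]

lemma value_box (G : SG S A) {V : S → ℝ} (hV : G.IsValue V) {s : S}
    (hs : s ∈ G.SUnk) (hb : s ∈ G.SBox) :
    V s = (G.Av s).sup' (G.Av_ne s) fun a => ∑ s', G.δ s a s' * V s' := by
  obtain ⟨h1, h2⟩ := G.mem_SUnk hs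
  conv_lhs => rw [← hV.2.1]
  rw [bellman, if_neg h1, if_neg h2, if_pos hb]

lemma value_circ (G : SG S A) {V : S → ℝ} (hV : G.IsValue V) {s : S}
    (hs : s ∈ G.SUnk) (hb : s ∉ G.SBox) :
    V s = (G.Av s).inf' (G.Av_ne s) fun a => ∑ s', G.δ s a s' * V s' := by
  obtain ⟨h1, h2⟩ := G.mem_SUnk hs
  conv_lhs => rw [← hV.2.1]
  rw [bellman, if_neg h1, if_neg h2, if_neg hb]


lemma step_up (G : SG S A) {V : S → ℝ} (hV : G.IsValue V) (k : ℕ)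
    (reach stay : ℕ → S → ℝ) (α : ℕ → S → A)
    (hF : ∀ s ∈ G.F, reach k s = 1 ∧ stay k s = 0)
    (hZ : ∀ s ∈ G.Z, reach k s = 0 ∧ stay k s = 0)
    (hαmem : ∀ s ∈ G.SUnk, α (k+1) s ∈ G.Av s)
    (hreach : ∀ s ∈ G.SUnk, reach (k+1) s = ∑ s', G.δ s (α (k+1) s) s' * reach k s')
    (hstay : ∀ s ∈ G.SUnk, stay (k+1) s = ∑ s', G.δ s (α (k+1) s) s' * stay k s')
    (x u : ℝ) (hxu : x ≤ u)
    (hdv : ∀ s ∈ G.SUnk, s ∈ G.SBox → G.dvalBox (reach k) (stay k) s (α (k+1) s) ≤ x)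
    (hopt : ∀ s ∈ G.SUnk, s ∈ G.SBox → ∀ a ∈ G.Av s,
      ∑ s', G.δ s a s' * (reach k s' + stay k s' * u)
        ≤ ∑ s', G.δ s (α (k+1) s) s' * (reach k s' + stay k s' * u))
    (hub : ∀ s ∈ G.SUnk, V s ≤ reach k s + stay k s * x) :
    ∀ s ∈ G.SUnk, V s ≤ reach (k+1) s + stay (k+1) s * x := by
  have hall : ∀ s', V s' ≤ reach k s' + stay k s' * x := by
    intro s'
    by_cases h1 : s' ∈ G.F
    · rw [G.value_F hV h1, (hF s' h1).1, (hF s' h1).2]; simp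
    · by_cases h2 : s' ∈ G.Z
      · rw [G.value_Z hV h2, (hZ s' h2).1, (hZ s' h2).2]; simp
      · exact hub s' (G.mem_SUnk_of h1 h2)
  intro s hs
  have hkey : ∀ a ∈ G.Av s, ∑ s', G.δ s a s' * V s'
      ≤ ∑ s', G.δ s a s' * (reach k s' + stay k s' * x) := fun a _ =>
    Finset.sum_le_sum fun s' _ => mul_le_mul_of_nonneg_left (hall s') (G.δ_nonneg s a s')
  have htarget : ∑ s', G.δ s (α (k+1) s) s' * (reach k s' + stay k s' * x)
      = reach (k+1) s + stay (k+1) s * x := by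
    rw [G.sum_affine, hreach s hs, hstay s hs]
  by_cases hb : s ∈ G.SBox
  · rw [G.value_box hV hs hb]
    apply Finset.sup'_le
    intro a ha
    calc ∑ s', G.δ s a s' * V s'
        ≤ ∑ s', G.δ s a s' * (reach k s' + stay k s' * x) := hkey a ha
      _ ≤ ∑ s', G.δ s (α (k+1) s) s' * (reach k s' + stay k s' * x) :=
          G.box_dom (reach k) (stay k) s _ x u hxu (hdv s hs hb) (hopt s hs hb) a ha
      _ = _ := htarget
  · rw [G.value_circ hV hs hb]
    calc (G.Av s).inf' (G.Av_ne s) (fun a => ∑ s', G.δ s a s' * V s')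
        ≤ ∑ s', G.δ s (α (k+1) s) s' * V s' := Finset.inf'_le _ (hαmem s hs)
      _ ≤ ∑ s', G.δ s (α (k+1) s) s' * (reach k s' + stay k s' * x) := hkey _ (hαmem s hs)
      _ = _ := htarget

lemma step_low (G : SG S A) {V : S → ℝ} (hV : G.IsValue V) (k : ℕ)
    (reach stay : ℕ → S → ℝ) (α : ℕ → S → A)
    (hF : ∀ s ∈ G.F, reach k s = 1 ∧ stay k s = 0)
    (hZ : ∀ s ∈ G.Z, reach k s = 0 ∧ stay k s = 0)
    (hαmem : ∀ s ∈ G.SUnk, α (k+1) s ∈ G.Av s)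
    (hreach : ∀ s ∈ G.SUnk, reach (k+1) s = ∑ s', G.δ s (α (k+1) s) s' * reach k s')
    (hstay : ∀ s ∈ G.SUnk, stay (k+1) s = ∑ s', G.δ s (α (k+1) s) s' * stay k s')
    (x l : ℝ) (hxl : l ≤ x)
    (hdv : ∀ s ∈ G.SUnk, s ∉ G.SBox → x ≤ G.dvalCirc (reach k) (stay k) s (α (k+1) s))
    (hopt : ∀ s ∈ G.SUnk, s ∉ G.SBox → ∀ a ∈ G.Av s,
      ∑ s', G.δ s (α (k+1) s) s' * (reach k s' + stay k s' * l)
        ≤ ∑ s', G.δ s a s' * (reach k s' + stay k s' * l))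
    (hlb : ∀ s ∈ G.SUnk, reach k s + stay k s * x ≤ V s) :
    ∀ s ∈ G.SUnk, reach (k+1) s + stay (k+1) s * x ≤ V s := by
  have hall : ∀ s', reach k s' + stay k s' * x ≤ V s' := by
    intro s'
    by_cases h1 : s' ∈ G.F
    · rw [G.value_F hV h1, (hF s' h1).1, (hF s' h1).2]; simp
    · by_cases h2 : s' ∈ G.Z
      · rw [G.value_Z hV h2, (hZ s' h2).1, (hZ s' h2).2]; simp
      · exact hlb s' (G.mem_SUnk_of h1 h2)
  intro s hs
  have hkey : ∀ a ∈ G.Av s, ∑ s', G.δ s a s' * (reach k s' + stay k s' * x)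
      ≤ ∑ s', G.δ s a s' * V s' := fun a _ =>
    Finset.sum_le_sum fun s' _ => mul_le_mul_of_nonneg_left (hall s') (G.δ_nonneg s a s')
  have htarget : ∑ s', G.δ s (α (k+1) s) s' * (reach k s' + stay k s' * x)
      = reach (k+1) s + stay (k+1) s * x := by
    rw [G.sum_affine, hreach s hs, hstay s hs]
  by_cases hb : s ∈ G.SBox
  · rw [G.value_box hV hs hb]
    rw [← htarget]
    calc ∑ s', G.δ s (α (k+1) s) s' * (reach k s' + stay k s' * x)
        ≤ ∑ s', G.δ s (α (k+1) s) s' * V s' := hkey _ (hαmem s hs)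
      _ ≤ _ := Finset.le_sup' (fun a => ∑ s', G.δ s a s' * V s') (hαmem s hs)
  · rw [G.value_circ hV hs hb, ← htarget]
    apply Finset.le_inf'
    intro a ha
    calc ∑ s', G.δ s (α (k+1) s) s' * (reach k s' + stay k s' * x)
        ≤ ∑ s', G.δ s a s' * (reach k s' + stay k s' * x) :=
          G.circ_dom (reach k) (stay k) s _ x l hxl (hdv s hs hb) (hopt s hs hb) a ha
      _ ≤ ∑ s', G.δ s a s' * V s' := hkey a ha

end SG
/-- Sound value iteration for stochastic games without end components — correctness
of the approximations (Thm. 3.2): along any run of the sound-value-iteration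
recursion, `reach_k(s) + stay_k(s)·l_k ≤ V(s) ≤ reach_k(s) + stay_k(s)·u_k`
for every `k` and every `s ∈ S?`. -/
theorem svi_sg_approximations_correct {S A : Type} [Fintype S] [DecidableEq S]
    (G : SG S A) (V : S → ℝ) (hV : G.IsValue V)
    (hne : G.SUnk.Nonempty)
    (reach stay : ℕ → S → ℝ) (α : ℕ → S → A) (l u dl du : ℕ → ℝ)
    (hrec : G.SVIRec hne reach stay α l u dl du) :
    ∀ k, ∀ s ∈ G.SUnk,
      reach k s + stay k s * l k ≤ V s ∧ V s ≤ reach k s + stay k s * u k := by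
  classical
  obtain ⟨hF, hZ, h0, hl0, hu0, hdu0, hdl0, hαmem, hmaxopt, hminopt,
    hreach, hstay, hdu, hdl, hu, hl⟩ := hrec
  have hV01 := hV.1
  set m := G.SUnk.sup' hne V with hm
  set m' := G.SUnk.inf' hne V with hm'
  have hm0 : 0 ≤ m := by
    obtain ⟨t, ht⟩ := hne
    exact le_trans (hV01 t).1 (Finset.le_sup' V ht)
  have hm1 : m ≤ 1 := Finset.sup'_le _ _ fun s _ => (hV01 s).2
  have hm'0 : 0 ≤ m' := Finset.le_inf' _ _ fun s _ => (hV01 s).1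
  have hm'1 : m' ≤ 1 := by
    obtain ⟨t, ht⟩ := hne
    exact le_trans (Finset.inf'_le V ht) (hV01 t).2
  have INV : ∀ k, (∀ s, 0 ≤ stay k s) ∧
      (∀ s ∈ G.SUnk, V s ≤ reach k s + stay k s * max (du k) m) ∧
      (∀ s ∈ G.SUnk, reach k s + stay k s * min (dl k) m' ≤ V s) ∧
      m ≤ u k ∧ du k ≤ u k ∧ l k ≤ m' ∧ l k ≤ dl k := by
    intro k
    induction k with
    | zero =>
      refine ⟨?_, ?_, ?_, ?_, ?_, ?_, ?_⟩
      · intro s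
        by_cases h1 : s ∈ G.F
        · rw [(hF 0 s h1).2]
        · by_cases h2 : s ∈ G.Z
          · rw [(hZ 0 s h2).2]
          · rw [(h0 s (G.mem_SUnk_of h1 h2)).2]; norm_num
      · intro s hs
        rw [(h0 s hs).1, (h0 s hs).2]
        have : V s ≤ max (du 0) m := le_trans (Finset.le_sup' V hs) (le_max_right _ _)
        linarith
      · intro s hs
        rw [(h0 s hs).1, (h0 s hs).2]
        have : min (dl 0) m' ≤ V s := le_trans (min_le_right _ _) (Finset.inf'_le V hs)
        linarith
      · rw [hu0]; exact hm1
      · rw [hu0, hdu0]; norm_num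
      · rw [hl0]; exact hm'0
      · rw [hl0, hdl0]; norm_num
    | succ k ih =>
      obtain ⟨ihst0, ihub, ihlb, ihmu, ihduu, ihlm, ihldl⟩ := ih
      have hstay0' : ∀ s, 0 ≤ stay (k+1) s := by
        intro s
        by_cases h1 : s ∈ G.F
        · rw [(hF (k+1) s h1).2]
        · by_cases h2 : s ∈ G.Z
          · rw [(hZ (k+1) s h2).2]
          · rw [hstay k s (G.mem_SUnk_of h1 h2)]
            exact Finset.sum_nonneg fun s' _ =>
              mul_nonneg (G.δ_nonneg _ _ _) (ihst0 s')
      have h0u : 0 ≤ u k := le_trans hm0 ihmu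
      have h1l : l k ≤ 1 := le_trans ihlm hm'1
      have hdumono : du k ≤ du (k+1) := by
        rw [hdu k]; split_ifs
        · exact le_max_left _ _
        · exact le_rfl
      have hdlmono : dl (k+1) ≤ dl k := by
        rw [hdl k]; split_ifs
        · exact min_le_left _ _
        · exact le_rfl
      have hdvball : ∀ s ∈ G.SUnk, s ∈ G.SBox →
          G.dvalBox (reach k) (stay k) s (α (k+1) s) ≤ u k := fun s hs hb =>
        G.dvalBox_le _ _ _ _ (u k) h0u (hmaxopt k s hs hb)
      have hdvcall : ∀ s ∈ G.SUnk, s ∉ G.SBox →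
          l k ≤ G.dvalCirc (reach k) (stay k) s (α (k+1) s) := fun s hs hb =>
        G.dvalCirc_ge _ _ _ _ (l k) h1l (hminopt k s hs hb)
      have hdu_le : du (k+1) ≤ u k := by
        rw [hdu k]; split_ifs with h
        · refine max_le ihduu (Finset.sup'_le _ _ fun s hsmem => ?_)
          obtain ⟨hs1, hs2⟩ := Finset.mem_inter.1 hsmem
          exact hdvball s hs1 hs2
        · exact ihduu
      have hdl_ge : l k ≤ dl (k+1) := by
        rw [hdl k]; split_ifs with h
        · refine le_min ihldl (Finset.le_inf' _ _ fun s hsmem => ?_)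
          obtain ⟨hs1, hs2⟩ := Finset.mem_sdiff.1 hsmem
          exact hdvcall s hs1 hs2
        · exact ihldl
      have hdvlocal : ∀ s ∈ G.SUnk, s ∈ G.SBox →
          G.dvalBox (reach k) (stay k) s (α (k+1) s) ≤ du (k+1) := by
        intro s hs hb
        have hmem : s ∈ G.SUnk ∩ G.SBox := Finset.mem_inter.2 ⟨hs, hb⟩
        rw [hdu k]; split_ifs with h
        · exact le_trans (Finset.le_sup'
            (fun s => G.dvalBox (reach k) (stay k) s (α (k + 1) s)) hmem)
            (le_max_right _ _)
        · exact absurd ⟨s, hmem⟩ h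
      have hdvclocal : ∀ s ∈ G.SUnk, s ∉ G.SBox →
          dl (k+1) ≤ G.dvalCirc (reach k) (stay k) s (α (k+1) s) := by
        intro s hs hb
        have hmem : s ∈ G.SUnk \ G.SBox := Finset.mem_sdiff.2 ⟨hs, hb⟩
        rw [hdl k]; split_ifs with h
        · exact le_trans (min_le_right _ _) (Finset.inf'_le
            (fun s => G.dvalCirc (reach k) (stay k) s (α (k + 1) s)) hmem)
        · exact absurd ⟨s, hmem⟩ h
      have hub1 : ∀ s ∈ G.SUnk, V s ≤ reach (k+1) s + stay (k+1) s * max (du (k+1)) m :=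
        G.step_up hV k reach stay α (hF k) (hZ k) (hαmem k) (hreach k) (hstay k)
          (max (du (k+1)) m) (u k) (max_le hdu_le ihmu)
          (fun s hs hb => le_trans (hdvlocal s hs hb) (le_max_left _ _))
          (hmaxopt k)
          (fun s hs => le_trans (ihub s hs) (by
            have hxx : max (du k) m ≤ max (du (k+1)) m :=
              max_le_max hdumono le_rfl
            have := mul_le_mul_of_nonneg_left hxx (ihst0 s)
            linarith))
      have hlb1 : ∀ s ∈ G.SUnk, reach (k+1) s + stay (k+1) s * min (dl (k+1)) m' ≤ V s :=
        G.step_low hV k reach stay α (hF k) (hZ k) (hαmem k) (hreach k) (hstay k)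
          (min (dl (k+1)) m') (l k) (le_min hdl_ge ihlm)
          (fun s hs hb => le_trans (min_le_left _ _) (hdvclocal s hs hb))
          (hminopt k)
          (fun s hs => le_trans (by
            have hxx : min (dl (k+1)) m' ≤ min (dl k) m' :=
              min_le_min hdlmono le_rfl
            have := mul_le_mul_of_nonneg_left hxx (ihst0 s)
            linarith) (ihlb s hs))
      refine ⟨hstay0', hub1, hlb1, ?_, ?_, ?_, ?_⟩
      · -- m ≤ u (k+1)
        rw [hu k]; split_ifs with hc
        · refine le_min ihmu ?_
          rcases le_or_gt m (du (k+1)) with h | h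
          · exact le_trans h (le_max_left _ _)
          · refine le_trans ?_ (le_max_right _ _)
            obtain ⟨t, ht, hteq⟩ := Finset.exists_mem_eq_sup' hne V
            rw [← hm] at hteq
            have hst := hc t ht
            have h2 := hub1 t ht
            rw [max_eq_right h.le] at h2
            rw [← hteq] at h2
            have hρ : m ≤ reach (k+1) t / (1 - stay (k+1) t) := by
              rw [le_div_iff₀ (by linarith)]
              nlinarith
            exact le_trans hρ (Finset.le_sup'
              (fun s => reach (k + 1) s / (1 - stay (k + 1) s)) ht)
        · exact ihmu
      · -- du (k+1) ≤ u (k+1)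
        rw [hu k]; split_ifs with hc
        · exact le_min hdu_le (le_max_left _ _)
        · exact hdu_le
      · -- l (k+1) ≤ m'
        rw [hl k]; split_ifs with hc
        · refine max_le ihlm ?_
          rcases le_or_gt (dl (k+1)) m' with h | h
          · exact le_trans (min_le_left _ _) h
          · refine le_trans (min_le_right _ _) ?_
            obtain ⟨t, ht, hteq⟩ := Finset.exists_mem_eq_inf' hne V
            rw [← hm'] at hteq
            have hst := hc t ht
            have h2 := hlb1 t ht
            rw [min_eq_right h.le] at h2
            rw [← hteq] at h2
            have hρ : reach (k+1) t / (1 - stay (k+1) t) ≤ m' := by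
              rw [div_le_iff₀ (by linarith)]
              nlinarith
            exact le_trans (Finset.inf'_le
              (fun s => reach (k + 1) s / (1 - stay (k + 1) s)) ht) hρ
        · exact ihlm
      · -- l (k+1) ≤ dl (k+1)
        rw [hl k]; split_ifs with hc
        · exact max_le hdl_ge (min_le_left _ _)
        · exact hdl_ge
  intro k s hs
  obtain ⟨hst0, hub, hlb, hmu, hduu, hlm, hldl⟩ := INV k
  constructor
  · refine le_trans ?_ (hlb s hs)
    have h1 : l k ≤ min (dl k) m' := le_min hldl hlm
    have := mul_le_mul_of_nonneg_left h1 (hst0 s)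
    linarith
  · refine le_trans (hub s hs) ?_
    have h1 : max (du k) m ≤ u k := max_le hduu hmu
    have := mul_le_mul_of_nonneg_left h1 (hst0 s)
    linarith
end

section
/- (Trap end components have value zero.) Fix a finite stochastic game with partition (F, Z, S?) and value V = lfp B. Let T ⊆ S? be an end component such that T has no Maximizer exit, i.e., for every s ∈ T ∩ S_Box and every a ∈ Av(s) we have Post(s,a) ⊆ T. Then V(s) = 0 for every s ∈ T. -/
section Aux

open Classical

variable {S A : Type} [Fintype S] [DecidableEq S]

lemma SG.sum_mono (G : SG S A) {f h : S → ℝ} (hfh : ∀ s, f s ≤ h s) (s : S) (a : A) :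
    ∑ s', G.δ s a s' * f s' ≤ ∑ s', G.δ s a s' * h s' :=
  Finset.sum_le_sum fun s' _ => mul_le_mul_of_nonneg_left (hfh s') (G.δ_nonneg s a s')

lemma SG.bellman_mono (G : SG S A) {f h : S → ℝ} (hfh : ∀ s, f s ≤ h s) (s : S) :
    G.bellman f s ≤ G.bellman h s := by
  unfold SG.bellman
  split_ifs with h1 h2 h3
  · exact le_rfl
  · exact le_rfl
  · refine Finset.sup'_le _ _ fun a ha => le_trans (G.sum_mono hfh s a) ?_
    exact Finset.le_sup' (fun a => ∑ s', G.δ s a s' * h s') ha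
  · refine Finset.le_inf' _ _ fun a ha => le_trans ?_ (G.sum_mono hfh s a)
    exact Finset.inf'_le _ ha

lemma SG.sum_bounds (G : SG S A) {f : S → ℝ} (hf : ∀ s, f s ∈ Set.Icc (0:ℝ) 1)
    (s : S) {a : A} (ha : a ∈ G.Av s) :
    (∑ s', G.δ s a s' * f s') ∈ Set.Icc (0:ℝ) 1 := by
  constructor
  · exact Finset.sum_nonneg fun s' _ => mul_nonneg (G.δ_nonneg s a s') (hf s').1
  · calc ∑ s', G.δ s a s' * f s' ≤ ∑ s', G.δ s a s' * 1 :=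
        Finset.sum_le_sum fun s' _ => mul_le_mul_of_nonneg_left (hf s').2 (G.δ_nonneg s a s')
    _ = 1 := by simpa using G.δ_sum s a ha

lemma SG.bellman_bounds (G : SG S A) {f : S → ℝ} (hf : ∀ s, f s ∈ Set.Icc (0:ℝ) 1)
    (s : S) : G.bellman f s ∈ Set.Icc (0:ℝ) 1 := by
  unfold SG.bellman
  split_ifs with h1 h2 h3
  · exact ⟨zero_le_one, le_rfl⟩
  · exact ⟨le_rfl, zero_le_one⟩
  · constructor
    · obtain ⟨a, ha⟩ := G.Av_ne s
      exact le_trans (G.sum_bounds hf s ha).1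
        (Finset.le_sup' (fun a => ∑ s', G.δ s a s' * f s') ha)
    · exact Finset.sup'_le _ _ fun a ha => (G.sum_bounds hf s ha).2
  · constructor
    · exact Finset.le_inf' _ _ fun a ha => (G.sum_bounds hf s ha).1
    · obtain ⟨a, ha⟩ := G.Av_ne s
      exact le_trans (Finset.inf'_le _ ha) (G.sum_bounds hf s ha).2

end Aux

/-- Trap end components have value zero: if `T ⊆ S?` is an end component with no
Maximizer exit (every action of every Maximizer state of `T` stays inside `T`),
then the value `V = lfp B` is `0` on `T`. -/
theorem svi_trap_ec_value_zero {S A : Type} [Fintype S] [DecidableEq S]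
    (G : SG S A) (V : S → ℝ) (hV : G.IsValue V)
    (T : Set S) (hTsub : T ⊆ (↑G.SUnk : Set S)) (hEC : G.IsEC T)
    (htrap : ∀ s ∈ T, s ∈ G.SBox → ∀ a ∈ G.Av s, ∀ s', 0 < G.δ s a s' → s' ∈ T) :
    ∀ s ∈ T, V s = 0 := by
  classical
  obtain ⟨hTne, B', hB'ne, hB'sub, hB'stay, hB'conn⟩ := hEC
  -- every state of `T` has an available action that stays inside `T`
  have hstayT : ∀ s ∈ T, ∃ a ∈ G.Av s, ∀ s', 0 < G.δ s a s' → s' ∈ T := by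
    intro s hs
    by_cases hsing : ∀ t ∈ T, t = s
    · obtain ⟨a, haB⟩ := hB'ne
      have := hB'sub haB
      simp only [Set.mem_iUnion, Finset.mem_coe] at this
      obtain ⟨t, ht, hat⟩ := this
      rw [hsing t ht] at hat
      exact ⟨a, hat, hB'stay s hs a haB hat⟩
    · push_neg at hsing
      obtain ⟨t, htT, hts⟩ := hsing
      have := hB'conn s hs t htT
      rcases (Relation.ReflTransGen.cases_head this) with h | ⟨b, ⟨_, a, haB, haAv, hδ⟩, _⟩
      · exact absurd h.symm hts
      · exact ⟨a, haAv, hB'stay s hs a haB haAv⟩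
  -- the modified operator making `T` states sinks
  set B2 : (S → ℝ) → (S → ℝ) := fun f s => if s ∈ T then 0 else G.bellman f s with hB2
  have hB2mono : ∀ {f h : S → ℝ}, (∀ s, f s ≤ h s) → ∀ s, B2 f s ≤ B2 h s := by
    intro f h hfh s
    simp only [hB2]
    split_ifs
    · exact le_rfl
    · exact G.bellman_mono hfh s
  have hB2bounds : ∀ {f : S → ℝ}, (∀ s, f s ∈ Set.Icc (0:ℝ) 1) →
      ∀ s, B2 f s ∈ Set.Icc (0:ℝ) 1 := by
    intro f hf s
    simp only [hB2]
    split_ifs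
    · exact ⟨le_rfl, zero_le_one⟩
    · exact G.bellman_bounds hf s
  -- Knaster–Tarski: greatest fixed point of B2 as sSup of post-fixed points
  set P : Set (S → ℝ) := {f | (∀ s, f s ∈ Set.Icc (0:ℝ) 1) ∧ ∀ s, f s ≤ B2 f s} with hP
  set g : S → ℝ := fun s => sSup ((fun f => f s) '' P) with hg
  have h0P : (fun _ : S => (0:ℝ)) ∈ P := by
    refine ⟨fun s => ⟨le_rfl, zero_le_one⟩, fun s => ?_⟩
    exact (hB2bounds (fun s => ⟨le_rfl, zero_le_one⟩) s).1
  have hPne : ∀ s : S, ((fun f => f s) '' P).Nonempty := fun s => ⟨0, _, h0P, rfl⟩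
  have hPbdd : ∀ s : S, BddAbove ((fun f => f s) '' P) := by
    intro s
    exact ⟨1, fun x ⟨f, hf, hfx⟩ => hfx ▸ (hf.1 s).2⟩
  have hle_g : ∀ f ∈ P, ∀ s, f s ≤ g s := fun f hf s =>
    le_csSup (hPbdd s) ⟨f, hf, rfl⟩
  have hg_bounds : ∀ s, g s ∈ Set.Icc (0:ℝ) 1 := by
    intro s
    exact ⟨hle_g _ h0P s, csSup_le (hPne s) fun x ⟨f, hf, hfx⟩ => hfx ▸ (hf.1 s).2⟩
  have hg_le : ∀ s, g s ≤ B2 g s := by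
    intro s
    refine csSup_le (hPne s) ?_
    rintro x ⟨f, hf, rfl⟩
    exact le_trans (hf.2 s) (hB2mono (hle_g f hf) s)
  have hB2gP : B2 g ∈ P :=
    ⟨hB2bounds hg_bounds, fun s => hB2mono hg_le s⟩
  have hg_fix : ∀ s, B2 g s = g s := fun s =>
    le_antisymm (hle_g _ hB2gP s) (hg_le s)
  -- g vanishes on T
  have hgT : ∀ s ∈ T, g s = 0 := by
    intro s hs
    have := hg_fix s
    simp only [hB2, if_pos hs] at this
    exact this.symm
  -- g is a fixed point of the original bellman operator
  have hgfixB : G.bellman g = g := by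
    funext s
    by_cases hsT : s ∈ T
    · -- s ∈ S?, so not in F, not in Z
      have hsU : s ∈ G.SUnk := hTsub hsT
      simp only [SG.SUnk, Finset.mem_sdiff, Finset.mem_union] at hsU
      push_neg at hsU
      obtain ⟨-, hsF, hsZ⟩ := hsU
      have hsum0 : ∀ a ∈ G.Av s, (∀ s', 0 < G.δ s a s' → s' ∈ T) →
          ∑ s', G.δ s a s' * g s' = 0 := by
        intro a _ hstay
        refine Finset.sum_eq_zero fun s' _ => ?_
        rcases lt_or_eq_of_le (G.δ_nonneg s a s') with hlt | heq
        · rw [hgT s' (hstay s' hlt), mul_zero]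
        · rw [← heq, zero_mul]
      rw [hgT s hsT]
      unfold SG.bellman
      rw [if_neg hsF, if_neg hsZ]
      by_cases hsB : s ∈ G.SBox
      · rw [if_pos hsB]
        apply le_antisymm
        · refine Finset.sup'_le _ _ fun a ha => ?_
          exact le_of_eq (hsum0 a ha (htrap s hsT hsB a ha))
        · obtain ⟨a, ha⟩ := G.Av_ne s
          refine le_trans (le_of_eq ?_) (Finset.le_sup' _ ha)
          exact (hsum0 a ha (htrap s hsT hsB a ha)).symm
      · rw [if_neg hsB]
        obtain ⟨a, haAv, hstay⟩ := hstayT s hsT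
        apply le_antisymm
        · exact le_trans (Finset.inf'_le _ haAv) (le_of_eq (hsum0 a haAv hstay))
        · exact Finset.le_inf' _ _ fun b hb =>
            (G.sum_bounds hg_bounds s hb).1
    · have := hg_fix s
      simp only [hB2, if_neg hsT] at this
      exact this
  -- conclude by minimality of V
  intro s hs
  have hle := hV.2.2 g hg_bounds hgfixB s
  have := (hV.1 s).1
  have := hgT s hs
  linarith
end

section
/- (Values in an end component are bounded by the best Maximizer exit.) Fix a finite stochastic game with partition (F, Z, S?) and value V = lfp B. Let Y ⊆ S? be an end component that has at least one Maximizer exit, i.e., the set E = {(s,a) : s ∈ Y ∩ S_Box, a ∈ Av(s), Post(s,a) ⊄ Y} is nonempty. Then for every s ∈ Y: V(s) ≤ max_{(s',a') ∈ E} ∑_{t} δ(s',a',t)·V(t). -/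
open Filter Topology in
private lemma sg_tendsto_sup' {ι : Type} (s : Finset ι) (hs : s.Nonempty)
    (f : ι → ℕ → ℝ) (g : ι → ℝ) (h : ∀ i ∈ s, Filter.Tendsto (f i) Filter.atTop (𝓝 (g i))) :
    Filter.Tendsto (fun n => s.sup' hs fun i => f i n) Filter.atTop (𝓝 (s.sup' hs g)) := by
  induction hs using Finset.Nonempty.cons_induction with
  | singleton i => simpa only [Finset.sup'_singleton] using h i (Finset.mem_singleton_self i)
  | cons i t hi ht ih =>
      simp only [Finset.sup'_cons (H := ht)]
      exact (h i (by simp)).max (ih fun j hj => h j (by simp [hj]))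

open Filter Topology in
private lemma sg_tendsto_inf' {ι : Type} (s : Finset ι) (hs : s.Nonempty)
    (f : ι → ℕ → ℝ) (g : ι → ℝ) (h : ∀ i ∈ s, Filter.Tendsto (f i) Filter.atTop (𝓝 (g i))) :
    Filter.Tendsto (fun n => s.inf' hs fun i => f i n) Filter.atTop (𝓝 (s.inf' hs g)) := by
  induction hs using Finset.Nonempty.cons_induction with
  | singleton i => simpa only [Finset.inf'_singleton] using h i (Finset.mem_singleton_self i)
  | cons i t hi ht ih =>
      simp only [Finset.inf'_cons (H := ht)]
      exact (h i (by simp)).min (ih fun j hj => h j (by simp [hj]))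

private lemma sg_bellman_mono {S A : Type} [Fintype S] [DecidableEq S] (G : SG S A)
    {g h : S → ℝ} (hgh : ∀ s, g s ≤ h s) (s : S) : G.bellman g s ≤ G.bellman h s := by
  have key : ∀ a, (∑ s', G.δ s a s' * g s') ≤ ∑ s', G.δ s a s' * h s' := fun a =>
    Finset.sum_le_sum fun t _ => mul_le_mul_of_nonneg_left (hgh t) (G.δ_nonneg s a t)
  unfold SG.bellman
  split_ifs
  · exact le_rfl
  · exact le_rfl
  · exact Finset.sup'_le _ _ fun a ha => (key a).trans (Finset.le_sup' (fun a => ∑ s', G.δ s a s' * h s') ha)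
  · exact Finset.le_inf' _ _ fun a ha => (Finset.inf'_le _ ha).trans (key a)

private lemma sg_bellman_mem_Icc {S A : Type} [Fintype S] [DecidableEq S] (G : SG S A)
    {g : S → ℝ} (hg : ∀ s, g s ∈ Set.Icc (0 : ℝ) 1) (s : S) :
    G.bellman g s ∈ Set.Icc (0 : ℝ) 1 := by
  have key : ∀ a ∈ G.Av s, (∑ s', G.δ s a s' * g s') ∈ Set.Icc (0 : ℝ) 1 := by
    intro a ha
    constructor
    · exact Finset.sum_nonneg fun t _ => mul_nonneg (G.δ_nonneg s a t) (hg t).1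
    · calc (∑ s', G.δ s a s' * g s') ≤ ∑ s', G.δ s a s' * 1 :=
            Finset.sum_le_sum fun t _ => mul_le_mul_of_nonneg_left (hg t).2 (G.δ_nonneg s a t)
        _ = 1 := by simp [G.δ_sum s a ha]
  unfold SG.bellman
  split_ifs
  · exact ⟨zero_le_one, le_rfl⟩
  · exact ⟨le_rfl, zero_le_one⟩
  · obtain ⟨a, ha⟩ := G.Av_ne s
    exact ⟨le_trans (key a ha).1 (Finset.le_sup' (fun a => ∑ s', G.δ s a s' * g s') ha),
      Finset.sup'_le _ _ fun b hb => (key b hb).2⟩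
  · obtain ⟨a, ha⟩ := G.Av_ne s
    exact ⟨Finset.le_inf' _ _ fun b hb => (key b hb).1,
      le_trans (Finset.inf'_le _ ha) (key a ha).2⟩

open scoped Classical in
/-- Values in an end component are bounded by the best Maximizer exit: if `Y ⊆ S?`
is an end component whose set `E` of Maximizer exiting state-action pairs is
nonempty, then for every `s ∈ Y`, `V(s) ≤ max_{(s',a') ∈ E} ∑_t δ(s',a',t)·V(t)`. -/
theorem svi_ec_bounded_by_best_exit {S A : Type} [Fintype S] [Fintype A]
    [DecidableEq S] (G : SG S A) (V : S → ℝ) (hV : G.IsValue V)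
    (Y : Finset S) (hYsub : (↑Y : Set S) ⊆ (↑G.SUnk : Set S)) (hEC : G.IsEC ↑Y)
    (E : Finset (S × A))
    (hE : E = Finset.univ.filter fun p : S × A =>
      p.1 ∈ Y ∧ p.1 ∈ G.SBox ∧ p.2 ∈ G.Av p.1 ∧ ∃ t, 0 < G.δ p.1 p.2 t ∧ t ∉ Y)
    (hEne : E.Nonempty) :
    ∀ s ∈ Y, V s ≤ E.sup' hEne fun p => ∑ t, G.δ p.1 p.2 t * V t := by
  classical
  obtain ⟨hVIcc, hVfix, hVleast⟩ := hV
  set m : ℝ := E.sup' hEne fun p => ∑ t, G.δ p.1 p.2 t * V t with hm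
  set f : ℕ → S → ℝ := fun n => (G.bellman)^[n] (fun _ => 0) with hf
  have hf0 : f 0 = fun _ => 0 := rfl
  have hfsucc : ∀ n, f (n + 1) = G.bellman (f n) := fun n =>
    Function.iterate_succ_apply' _ _ _
  have hfIcc : ∀ n s, f n s ∈ Set.Icc (0 : ℝ) 1 := by
    intro n
    induction n with
    | zero => intro s; rw [hf0]; exact ⟨le_rfl, zero_le_one⟩
    | succ n ih => intro s; rw [hfsucc]; exact sg_bellman_mem_Icc G ih s
  have hfleV : ∀ n s, f n s ≤ V s := by
    intro n
    induction n with
    | zero => intro s; rw [hf0]; exact (hVIcc s).1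
    | succ n ih =>
        intro s
        rw [hfsucc]
        calc G.bellman (f n) s ≤ G.bellman V s := sg_bellman_mono G ih s
          _ = V s := congrFun hVfix s
  have hfmono : ∀ n s, f n s ≤ f (n + 1) s := by
    intro n
    induction n with
    | zero =>
        intro s
        rw [hfsucc, hf0]
        exact (sg_bellman_mem_Icc G (fun t => ⟨le_rfl, zero_le_one⟩) s).1
    | succ n ih => intro s; rw [hfsucc, hfsucc]; exact sg_bellman_mono G ih s
  have hfmono' : ∀ s, Monotone fun n => f n s := fun s =>
    monotone_nat_of_le_succ fun n => hfmono n s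
  set L : S → ℝ := fun s => ⨆ n, f n s with hL
  have hbdd : ∀ s, BddAbove (Set.range fun n => f n s) := by
    intro s
    refine ⟨1, ?_⟩
    rintro x ⟨n, rfl⟩
    exact (hfIcc n s).2
  have hLtendsto : ∀ s, Filter.Tendsto (fun n => f n s) Filter.atTop (nhds (L s)) :=
    fun s => tendsto_atTop_ciSup (hfmono' s) (hbdd s)
  have hLIcc : ∀ s, L s ∈ Set.Icc (0 : ℝ) 1 := by
    intro s
    refine ⟨?_, ciSup_le fun n => (hfIcc n s).2⟩
    exact le_trans (hfIcc 0 s).1 (le_ciSup (hbdd s) 0)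
  have hLfix : G.bellman L = L := by
    funext s
    have h1 : Filter.Tendsto (fun n => G.bellman (f n) s) Filter.atTop
        (nhds (G.bellman L s)) := by
      by_cases hF : s ∈ G.F
      · simp only [SG.bellman, if_pos hF]; exact tendsto_const_nhds
      · by_cases hZ : s ∈ G.Z
        · simp only [SG.bellman, if_neg hF, if_pos hZ]; exact tendsto_const_nhds
        · by_cases hB : s ∈ G.SBox
          · simp only [SG.bellman, if_neg hF, if_neg hZ, if_pos hB]
            exact sg_tendsto_sup' _ (G.Av_ne s) _ _ fun a _ =>
              tendsto_finset_sum _ fun t _ => (hLtendsto t).const_mul (G.δ s a t)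
          · simp only [SG.bellman, if_neg hF, if_neg hZ, if_neg hB]
            exact sg_tendsto_inf' _ (G.Av_ne s) _ _ fun a _ =>
              tendsto_finset_sum _ fun t _ => (hLtendsto t).const_mul (G.δ s a t)
    have h2 : Filter.Tendsto (fun n => G.bellman (f n) s) Filter.atTop (nhds (L s)) := by
      have h3 := (hLtendsto s).comp (Filter.tendsto_add_atTop_nat 1)
      have h4 : (fun n => f (n + 1) s) = fun n => G.bellman (f n) s := by
        funext n; rw [hfsucc]
      simpa only [Function.comp_def, h4] using h3
    exact tendsto_nhds_unique h1 h2
  obtain ⟨hYne, B', hB'ne, hB'sub, hB'stay, hB'reach⟩ := hEC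
  have hact : ∀ s ∈ Y, ∃ a ∈ B', a ∈ G.Av s := by
    intro s hs
    by_cases hsing : ∀ x ∈ Y, x = s
    · obtain ⟨a, ha⟩ := hB'ne
      have h5 := hB'sub ha
      simp only [Set.mem_iUnion] at h5
      obtain ⟨x, hx, hax⟩ := h5
      have hxY : x ∈ Y := by exact_mod_cast hx
      have hxeq : x = s := hsing x hxY
      subst hxeq
      exact ⟨a, ha, by exact_mod_cast hax⟩
    · push_neg at hsing
      obtain ⟨x, hxY, hxs⟩ := hsing
      have hreach := hB'reach s (by exact_mod_cast hs) x (by exact_mod_cast hxY)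
      rcases Relation.ReflTransGen.cases_head hreach with heq | ⟨y, ⟨_, a, haB, haAv, _⟩, _⟩
      · exact absurd heq.symm hxs
      · exact ⟨a, haB, haAv⟩
  have hm0 : 0 ≤ m := by
    obtain ⟨p, hp⟩ := hEne
    rw [hm]
    refine le_trans ?_ (Finset.le_sup' (fun p : S × A => ∑ t, G.δ p.1 p.2 t * V t) hp)
    exact Finset.sum_nonneg fun t _ => mul_nonneg (G.δ_nonneg _ _ _) (hVIcc t).1
  have hkey : ∀ n, ∀ s ∈ Y, f n s ≤ m := by
    intro n
    induction n with
    | zero => intro s _; rw [hf0]; exact hm0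
    | succ n ih =>
        intro s hs
        have hsU : s ∈ G.SUnk := by exact_mod_cast hYsub (by exact_mod_cast hs)
        have hsFZ : s ∉ G.F ∪ G.Z := by
          simp only [SG.SUnk, Finset.mem_sdiff] at hsU
          exact hsU.2
        have hsF : s ∉ G.F := fun h => hsFZ (Finset.mem_union_left _ h)
        have hsZ : s ∉ G.Z := fun h => hsFZ (Finset.mem_union_right _ h)
        have hbound : ∀ a ∈ G.Av s, (∀ t, 0 < G.δ s a t → t ∈ Y) →
            (∑ t, G.δ s a t * f n t) ≤ m := by
          intro a ha hstay
          calc ∑ t, G.δ s a t * f n t ≤ ∑ t, G.δ s a t * m := by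
                apply Finset.sum_le_sum
                intro t _
                rcases lt_or_eq_of_le (G.δ_nonneg s a t) with hpos | heq
                · exact mul_le_mul_of_nonneg_left (ih t (hstay t hpos)) (le_of_lt hpos)
                · rw [← heq]; simp
            _ = m := by rw [← Finset.sum_mul, G.δ_sum s a ha, one_mul]
        rw [hfsucc]
        by_cases hB : s ∈ G.SBox
        · have hbe : G.bellman (f n) s =
              (G.Av s).sup' (G.Av_ne s) fun a => ∑ t, G.δ s a t * f n t := by
            simp [SG.bellman, hsF, hsZ, hB]
          rw [hbe]
          apply Finset.sup'_le
          intro a ha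
          by_cases hexit : ∃ t, 0 < G.δ s a t ∧ t ∉ Y
          · have hpE : (s, a) ∈ E := by
              rw [hE]; simp only [Finset.mem_filter, Finset.mem_univ, true_and]
              exact ⟨hs, hB, ha, hexit⟩
            calc ∑ t, G.δ s a t * f n t ≤ ∑ t, G.δ s a t * V t :=
                  Finset.sum_le_sum fun t _ =>
                    mul_le_mul_of_nonneg_left (hfleV n t) (G.δ_nonneg s a t)
              _ ≤ m := by
                rw [hm]
                exact Finset.le_sup' (fun p : S × A => ∑ t, G.δ p.1 p.2 t * V t) hpE
          · push_neg at hexit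
            exact hbound a ha hexit
        · obtain ⟨a, haB, haAv⟩ := hact s hs
          have hbe : G.bellman (f n) s =
              (G.Av s).inf' (G.Av_ne s) fun a => ∑ t, G.δ s a t * f n t := by
            simp [SG.bellman, hsF, hsZ, hB]
          rw [hbe]
          refine le_trans (Finset.inf'_le _ haAv) (hbound a haAv fun t ht => ?_)
          exact_mod_cast hB'stay s (by exact_mod_cast hs) a haB haAv t ht
  intro s hs
  calc V s ≤ L s := hVleast L hLIcc hLfix s
    _ ≤ m := ciSup_le fun n => hkey n s hs
end
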